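/- arXiv:2111.14216 — 6 statements merged into one kernel-verified Lean document; each statement's English description precedes it below -/
import Mathlib

section
/- Let d, m, n₀, n₁, …, n_d be natural numbers with n = n₀ + n₁ + ⋯ + n_d, and let H = [[A₁₁(z), A₁₂(z)], [A₂₁(z), A₂₂(z)]] = H₀ + z₁A₁ + ⋯ + z_dA_d be an (m+n)×(m+n) matrix pencil where H₀ satisfies (H₀ − H₀*)/(2i) ⪰ 0 and A₁, …, A_d are positive semidefinite, the upper-left block being m×m. If the lower-right block A₂₂(z) is invertible for every z ∈ Π^d, then f(z) = A₁₁(z) − A₁₂(z)A₂₂(z)⁻¹A₂₁(z) belongs to the Pick class 𝒫_d^{m×m}; indeed for all z, ζ where the inverses exist, (f(z) − f(ζ)*)/(2i) = (I_m, −A₂₁(ζ)*A₂₂(ζ)⁻¹*) · (H₀ − H₀*)/(2i) · (I_m; −A₂₂(z)⁻¹A₂₁(z)) + Σ_{k=1}^d (z_k − ζ̄_k)/(2i) · (I_m, −A₂₁(ζ)*A₂₂(ζ)⁻¹*) · A_k · (I_m; −A₂₂(z)⁻¹A₂₁(z)). -/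
open Matrix MvPolynomial
open scoped ComplexOrder

noncomputable section

/-- The open upper poly-half-plane `Π^d` (coordinates indexed by `ι`). -/
def UHP (ι : Type*) : Set (ι → ℂ) := {z | ∀ k, 0 < (z k).im}

/-- `(M - Mᴴ)/(2i)`. -/
def imPart {n : Type*} (M : Matrix n n ℂ) : Matrix n n ℂ :=
  (2 * Complex.I)⁻¹ • (M - Mᴴ)

/-- The linear matrix pencil `H₀ + z₁ A₁ + ⋯ + z_d A_d`. -/
def pencil {d m n : ℕ} (H0 : Matrix (Fin m ⊕ Fin n) (Fin m ⊕ Fin n) ℂ)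
    (A : Fin d → Matrix (Fin m ⊕ Fin n) (Fin m ⊕ Fin n) ℂ) (z : Fin d → ℂ) :
    Matrix (Fin m ⊕ Fin n) (Fin m ⊕ Fin n) ℂ :=
  H0 + ∑ k, z k • A k

/-- The block column `(I_m ; -A₂₂(z)⁻¹ A₂₁(z))`. -/
def pencilCol {d m n : ℕ} (H0 : Matrix (Fin m ⊕ Fin n) (Fin m ⊕ Fin n) ℂ)
    (A : Fin d → Matrix (Fin m ⊕ Fin n) (Fin m ⊕ Fin n) ℂ) (z : Fin d → ℂ) :
    Matrix (Fin m ⊕ Fin n) (Fin m) ℂ :=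
  Matrix.fromRows (1 : Matrix (Fin m) (Fin m) ℂ)
    (-(((pencil H0 A z).toBlocks₂₂)⁻¹ * (pencil H0 A z).toBlocks₂₁))

section AuxPick

variable {E : Type*} [NormedAddCommGroup E] [NormedSpace ℂ E]

lemma diffOn_finset_prod' {ι : Type*} {t : Set E} (s : Finset ι) (g : ι → E → ℂ)
    (h : ∀ i ∈ s, DifferentiableOn ℂ (g i) t) :
    DifferentiableOn ℂ (fun z => ∏ i ∈ s, g i z) t := by
  classical
  induction s using Finset.induction_on with
  | empty => simpa using differentiableOn_const (1 : ℂ)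
  | insert a s' hne ih =>
    simp only [Finset.prod_insert hne]
    exact (h a (Finset.mem_insert_self _ _)).mul
      (ih fun i hi => h i (Finset.mem_insert_of_mem hi))

lemma diffOn_det' {k : Type*} [Fintype k] [DecidableEq k] {t : Set E}
    (M : E → Matrix k k ℂ) (h : ∀ i j, DifferentiableOn ℂ (fun z => M z i j) t) :
    DifferentiableOn ℂ (fun z => (M z).det) t := by
  simp only [Matrix.det_apply']
  exact DifferentiableOn.fun_sum fun σ _ =>
    ((diffOn_finset_prod' _ _ fun i _ => h (σ i) i).const_mul _)

lemma diffOn_mul_entry' {a b c : Type*} [Fintype b] {t : Set E}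
    (M : E → Matrix a b ℂ) (N : E → Matrix b c ℂ)
    (hM : ∀ i j, DifferentiableOn ℂ (fun z => M z i j) t)
    (hN : ∀ i j, DifferentiableOn ℂ (fun z => N z i j) t) (i : a) (j : c) :
    DifferentiableOn ℂ (fun z => (M z * N z) i j) t := by
  simp only [Matrix.mul_apply]
  exact DifferentiableOn.fun_sum fun x _ => (hM i x).mul (hN x j)

lemma posSemidef_smul_real {N : Type*} [Fintype N] {c : ℝ} (hc : 0 ≤ c)
    {M : Matrix N N ℂ} (hM : M.PosSemidef) : ((c : ℂ) • M).PosSemidef := by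
  constructor
  · unfold Matrix.IsHermitian
    rw [Matrix.conjTranspose_smul, hM.1.eq]
    simp
  · exact (hM.smul (show (0:ℂ) ≤ (c:ℂ) by exact_mod_cast hc)).2

lemma posSemidef_add' {N : Type*} [Fintype N] {M1 M2 : Matrix N N ℂ}
    (h1 : M1.PosSemidef) (h2 : M2.PosSemidef) : (M1 + M2).PosSemidef :=
  ⟨h1.1.add h2.1, (h1.add h2).2⟩

lemma posSemidef_sum' {ι N : Type*} [Fintype N] (s : Finset ι) (M : ι → Matrix N N ℂ)
    (h : ∀ i ∈ s, (M i).PosSemidef) : (∑ i ∈ s, M i).PosSemidef := by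
  classical
  induction s using Finset.induction_on with
  | empty => simpa using Matrix.PosSemidef.zero
  | insert a s' hne ih =>
    rw [Finset.sum_insert hne]
    exact posSemidef_add' (h a (Finset.mem_insert_self _ _))
      (ih fun i hi => h i (Finset.mem_insert_of_mem hi))

end AuxPick

/-- a linear pencil with `(H₀-H₀*)/(2i) ⪰ 0` and `A_k ⪰ 0`, whose lower
right block is invertible on the upper poly-half-plane, produces via the Schur
complement a function of the Pick class, together with the two-point identity. -/
theorem pick_from_long_resolvent (d m n : ℕ)
    (H0 : Matrix (Fin m ⊕ Fin n) (Fin m ⊕ Fin n) ℂ)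
    (A : Fin d → Matrix (Fin m ⊕ Fin n) (Fin m ⊕ Fin n) ℂ)
    (hH0 : (imPart H0).PosSemidef)
    (hA : ∀ k, (A k).PosSemidef)
    (hinv : ∀ z ∈ UHP (Fin d), IsUnit ((pencil H0 A z).toBlocks₂₂))
    (f : (Fin d → ℂ) → Matrix (Fin m) (Fin m) ℂ)
    (hf : ∀ z, f z = (pencil H0 A z).toBlocks₁₁ -
      (pencil H0 A z).toBlocks₁₂ * ((pencil H0 A z).toBlocks₂₂)⁻¹ * (pencil H0 A z).toBlocks₂₁) :
    (∀ i j, DifferentiableOn ℂ (fun z => f z i j) (UHP (Fin d))) ∧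
    (∀ z ∈ UHP (Fin d), (imPart (f z)).PosSemidef) ∧
    (∀ z ζ : Fin d → ℂ, IsUnit ((pencil H0 A z).toBlocks₂₂) →
      IsUnit ((pencil H0 A ζ).toBlocks₂₂) →
      (2 * Complex.I)⁻¹ • (f z - (f ζ)ᴴ) =
        (pencilCol H0 A ζ)ᴴ * imPart H0 * pencilCol H0 A z +
          ∑ k, ((z k - (starRingEnd ℂ) (ζ k)) / (2 * Complex.I)) •
            ((pencilCol H0 A ζ)ᴴ * A k * pencilCol H0 A z)) := by
  classical
  have hcol : ∀ z, IsUnit ((pencil H0 A z).toBlocks₂₂) →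
      pencil H0 A z * pencilCol H0 A z = Matrix.fromRows (f z) 0 := by
    intro z hz
    have hdet : IsUnit ((pencil H0 A z).toBlocks₂₂).det :=
      (Matrix.isUnit_iff_isUnit_det _).mp hz
    conv_lhs => rw [← Matrix.fromBlocks_toBlocks (pencil H0 A z)]
    rw [pencilCol, Matrix.fromBlocks_mul_fromRows]
    simp only [Matrix.mul_one, Matrix.mul_neg, ← Matrix.mul_assoc]
    rw [Matrix.mul_nonsing_inv _ hdet, Matrix.one_mul, add_neg_cancel,
      ← sub_eq_add_neg, hf]
  have hleft : ∀ z ζ : Fin d → ℂ, IsUnit ((pencil H0 A z).toBlocks₂₂) →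
      (pencilCol H0 A ζ)ᴴ * (pencil H0 A z * pencilCol H0 A z) = f z := by
    intro z ζ hz
    rw [hcol z hz, pencilCol, Matrix.conjTranspose_fromRows_eq_fromCols_conjTranspose,
      Matrix.fromCols_mul_fromRows]
    simp
  have hright : ∀ z ζ : Fin d → ℂ, IsUnit ((pencil H0 A ζ).toBlocks₂₂) →
      ((pencilCol H0 A ζ)ᴴ * (pencil H0 A ζ)ᴴ) * pencilCol H0 A z = (f ζ)ᴴ := by
    intro z ζ hζ
    rw [← Matrix.conjTranspose_mul, hcol ζ hζ,
      Matrix.conjTranspose_fromRows_eq_fromCols_conjTranspose, pencilCol,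
      Matrix.fromCols_mul_fromRows]
    simp
  have hAH : ∀ k, (A k)ᴴ = A k := fun k => (hA k).1
  have hdiffP : ∀ z ζ : Fin d → ℂ,
      pencil H0 A z - (pencil H0 A ζ)ᴴ =
        (H0 - H0ᴴ) + ∑ k, (z k - (starRingEnd ℂ) (ζ k)) • A k := by
    intro z ζ
    simp only [pencil, Matrix.conjTranspose_add, Matrix.conjTranspose_sum,
      Matrix.conjTranspose_smul, hAH, Complex.star_def, sub_smul, Finset.sum_sub_distrib]
    abel
  have main : ∀ z ζ : Fin d → ℂ, IsUnit ((pencil H0 A z).toBlocks₂₂) →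
      IsUnit ((pencil H0 A ζ).toBlocks₂₂) →
      f z - (f ζ)ᴴ = (pencilCol H0 A ζ)ᴴ * (H0 - H0ᴴ) * pencilCol H0 A z +
        ∑ k, (z k - (starRingEnd ℂ) (ζ k)) •
          ((pencilCol H0 A ζ)ᴴ * A k * pencilCol H0 A z) := by
    intro z ζ hz hζ
    have h1 : f z - (f ζ)ᴴ =
        (pencilCol H0 A ζ)ᴴ * (pencil H0 A z - (pencil H0 A ζ)ᴴ) * pencilCol H0 A z := by
      rw [Matrix.mul_sub, Matrix.sub_mul, Matrix.mul_assoc _ (pencil H0 A z),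
        hleft z ζ hz, hright z ζ hζ]
    rw [h1, hdiffP]
    simp only [Matrix.mul_add, Matrix.add_mul, Matrix.mul_sum, Matrix.sum_mul,
      Matrix.mul_smul, Matrix.smul_mul]
  have part3 : ∀ z ζ : Fin d → ℂ, IsUnit ((pencil H0 A z).toBlocks₂₂) →
      IsUnit ((pencil H0 A ζ).toBlocks₂₂) →
      (2 * Complex.I)⁻¹ • (f z - (f ζ)ᴴ) =
        (pencilCol H0 A ζ)ᴴ * imPart H0 * pencilCol H0 A z +
          ∑ k, ((z k - (starRingEnd ℂ) (ζ k)) / (2 * Complex.I)) •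
            ((pencilCol H0 A ζ)ᴴ * A k * pencilCol H0 A z) := by
    intro z ζ hz hζ
    rw [main z ζ hz hζ, imPart]
    simp only [smul_add, Finset.smul_sum, smul_smul, Matrix.mul_smul, Matrix.smul_mul,
      div_eq_inv_mul]
  have hPent : ∀ (a b : Fin m ⊕ Fin n),
      Differentiable ℂ (fun z : Fin d → ℂ => pencil H0 A z a b) := by
    intro a b
    have he : (fun z : Fin d → ℂ => pencil H0 A z a b)
        = fun z => H0 a b + ∑ k, z k * A k a b := by
      funext z
      simp [pencil, Matrix.sum_apply]
    rw [he]
    exact (differentiable_const _).add (Differentiable.fun_sum fun k _ =>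
      ((ContinuousLinearMap.proj k : (Fin d → ℂ) →L[ℂ] ℂ).differentiable).mul_const _)
  refine ⟨?_, ?_, part3⟩
  · intro i j
    have hdetB : DifferentiableOn ℂ
        (fun z => ((pencil H0 A z).toBlocks₂₂).det) (UHP (Fin d)) :=
      diffOn_det' _ (fun i j => (hPent (Sum.inr i) (Sum.inr j)).differentiableOn)
    have hdet_ne : ∀ z ∈ UHP (Fin d), ((pencil H0 A z).toBlocks₂₂).det ≠ 0 := by
      intro z hz
      exact isUnit_iff_ne_zero.mp ((Matrix.isUnit_iff_isUnit_det _).mp (hinv z hz))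
    have hadj : ∀ i j, DifferentiableOn ℂ
        (fun z => ((pencil H0 A z).toBlocks₂₂).adjugate i j) (UHP (Fin d)) := by
      intro i j
      have he : (fun z => ((pencil H0 A z).toBlocks₂₂).adjugate i j)
          = fun z => (((pencil H0 A z).toBlocks₂₂).updateRow j (Pi.single i 1)).det := by
        funext z
        rw [Matrix.adjugate_apply]
      rw [he]
      apply diffOn_det'
      intro a b
      by_cases h : a = j
      · simp only [Matrix.updateRow_apply, h, if_pos rfl]
        exact differentiableOn_const _
      · simp only [Matrix.updateRow_apply, if_neg h]
        exact (hPent (Sum.inr a) (Sum.inr b)).differentiableOn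
    have hBinv : ∀ i j, DifferentiableOn ℂ
        (fun z => ((pencil H0 A z).toBlocks₂₂)⁻¹ i j) (UHP (Fin d)) := by
      intro i j
      have he : (fun z => ((pencil H0 A z).toBlocks₂₂)⁻¹ i j)
          = fun z => (((pencil H0 A z).toBlocks₂₂).det)⁻¹ *
              ((pencil H0 A z).toBlocks₂₂).adjugate i j := by
        funext z
        rw [Matrix.inv_def, Matrix.smul_apply, Ring.inverse_eq_inv, smul_eq_mul]
      rw [he]
      exact (hdetB.inv hdet_ne).mul (hadj i j)
    have hfe : (fun z => f z i j) = fun z => (pencil H0 A z).toBlocks₁₁ i j -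
        ((pencil H0 A z).toBlocks₁₂ * ((pencil H0 A z).toBlocks₂₂)⁻¹ *
          (pencil H0 A z).toBlocks₂₁) i j := by
      funext z
      rw [hf z, Matrix.sub_apply]
    rw [hfe]
    apply DifferentiableOn.sub
    · exact (hPent (Sum.inl i) (Sum.inl j)).differentiableOn
    · refine diffOn_mul_entry' _ _ ?_ ?_ i j
      · refine fun a b => diffOn_mul_entry' _ _ ?_ hBinv a b
        exact fun a b => (hPent (Sum.inl a) (Sum.inr b)).differentiableOn
      · exact fun a b => (hPent (Sum.inr a) (Sum.inl b)).differentiableOn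
  · intro z hz
    have hu := hinv z hz
    have hid := part3 z z hu hu
    rw [imPart, hid]
    refine posSemidef_add' (hH0.conjTranspose_mul_mul_same _) (posSemidef_sum' _ _ ?_)
    intro k _
    have h2I : (2 * Complex.I) ≠ 0 := by simp [Complex.I_ne_zero]
    have hsc : (z k - (starRingEnd ℂ) (z k)) / (2 * Complex.I) = (((z k).im : ℝ) : ℂ) := by
      rw [Complex.sub_conj]
      field_simp
      norm_cast
    rw [hsc]
    exact posSemidef_smul_real (le_of_lt (hz k)) ((hA k).conjTranspose_mul_mul_same _)
end
end

section
/- Let H = H₀ + z₁A₁ + ⋯ + z_dA_d = [[A₁₁(z), A₁₂(z)], [A₂₁(z), A₂₂(z)]] be a matrix pencil with (H₀ − H₀*)/(2i) ⪰ 0 and A_k ⪰ 0 for k = 1,…,d, and suppose A₂₂(z) is invertible for all z ∈ Π^d. Factor (H₀ − H₀*)/(2i) = B₀*B₀ and A_k = B_k*B_k for k = 1,…,d, and define θ_k(z) = B_k · (I_m; −A₂₂(z)⁻¹A₂₁(z)) for k = 0, 1, …, d. Then the function f(z) = A₁₁(z) − A₁₂(z)A₂₂(z)⁻¹A₂₁(z)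 satisfies the positive-kernel decomposition (f(z) − f(ζ)*)/(2i) = θ₀(ζ)*θ₀(z) + Σ_{k=1}^d (z_k − ζ̄_k)/(2i) · θ_k(ζ)*θ_k(z) for all z, ζ ∈ Π^d. -/
open Matrix MvPolynomial
open scoped ComplexOrder

noncomputable section

/-- the positive-kernel decomposition
`(f(z)-f(ζ)*)/(2i) = θ₀(ζ)*θ₀(z) + Σ_k ((z_k-ζ̄_k)/(2i)) θ_k(ζ)*θ_k(z)`. -/
theorem positive_kernel_decomposition (d m n : ℕ) (r0 : ℕ) (r : Fin d → ℕ)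
    (H0 : Matrix (Fin m ⊕ Fin n) (Fin m ⊕ Fin n) ℂ)
    (A : Fin d → Matrix (Fin m ⊕ Fin n) (Fin m ⊕ Fin n) ℂ)
    (hH0 : (imPart H0).PosSemidef)
    (hA : ∀ k, (A k).PosSemidef)
    (hinv : ∀ z ∈ UHP (Fin d), IsUnit ((pencil H0 A z).toBlocks₂₂))
    (B0 : Matrix (Fin r0) (Fin m ⊕ Fin n) ℂ)
    (hB0 : B0ᴴ * B0 = imPart H0)
    (B : (k : Fin d) → Matrix (Fin (r k)) (Fin m ⊕ Fin n) ℂ)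
    (hB : ∀ k, (B k)ᴴ * B k = A k)
    (θ0 : (Fin d → ℂ) → Matrix (Fin r0) (Fin m) ℂ)
    (hθ0 : ∀ z, θ0 z = B0 * pencilCol H0 A z)
    (θ : (k : Fin d) → (Fin d → ℂ) → Matrix (Fin (r k)) (Fin m) ℂ)
    (hθ : ∀ k z, θ k z = B k * pencilCol H0 A z)
    (f : (Fin d → ℂ) → Matrix (Fin m) (Fin m) ℂ)
    (hf : ∀ z, f z = (pencil H0 A z).toBlocks₁₁ -
      (pencil H0 A z).toBlocks₁₂ * ((pencil H0 A z).toBlocks₂₂)⁻¹ * (pencil H0 A z).toBlocks₂₁) :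
    ∀ z ∈ UHP (Fin d), ∀ ζ ∈ UHP (Fin d),
      (2 * Complex.I)⁻¹ • (f z - (f ζ)ᴴ) =
        (θ0 ζ)ᴴ * θ0 z +
          ∑ k, ((z k - (starRingEnd ℂ) (ζ k)) / (2 * Complex.I)) • ((θ k ζ)ᴴ * θ k z) := by
  intro z hz ζ hζ
  have key : ∀ w ∈ UHP (Fin d),
      pencil H0 A w * pencilCol H0 A w
        = Matrix.fromRows (f w) (0 : Matrix (Fin n) (Fin m) ℂ) := by
    intro w hw
    have hdet : IsUnit ((pencil H0 A w).toBlocks₂₂).det :=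
      (Matrix.isUnit_iff_isUnit_det _).mp (hinv w hw)
    conv_lhs => rw [← Matrix.fromBlocks_toBlocks (pencil H0 A w)]
    rw [pencilCol, Matrix.fromBlocks_mul_fromRows]
    have hbot : (pencil H0 A w).toBlocks₂₁ * (1 : Matrix (Fin m) (Fin m) ℂ) + (pencil H0 A w).toBlocks₂₂ *
        -(((pencil H0 A w).toBlocks₂₂)⁻¹ * (pencil H0 A w).toBlocks₂₁) = 0 := by
      rw [Matrix.mul_one, Matrix.mul_neg, ← Matrix.mul_assoc,
        Matrix.mul_nonsing_inv _ hdet, Matrix.one_mul, add_neg_cancel]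
    have htop : (pencil H0 A w).toBlocks₁₁ * (1 : Matrix (Fin m) (Fin m) ℂ) + (pencil H0 A w).toBlocks₁₂ *
        -(((pencil H0 A w).toBlocks₂₂)⁻¹ * (pencil H0 A w).toBlocks₂₁) = f w := by
      rw [hf w, Matrix.mul_one, Matrix.mul_neg, ← sub_eq_add_neg, Matrix.mul_assoc]
    rw [htop, hbot]
  set Cz := pencilCol H0 A z with hCzdef
  set Cζ := pencilCol H0 A ζ with hCζdef
  have h1 : Cζᴴ * (pencil H0 A z * Cz) = f z := by
    rw [key z hz, hCζdef, pencilCol,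
      Matrix.conjTranspose_fromRows_eq_fromCols_conjTranspose,
      Matrix.fromCols_mul_fromRows, Matrix.conjTranspose_one, Matrix.one_mul,
      Matrix.mul_zero, add_zero]
  have h2 : (pencil H0 A ζ * Cζ)ᴴ * Cz = (f ζ)ᴴ := by
    rw [key ζ hζ, Matrix.conjTranspose_fromRows_eq_fromCols_conjTranspose,
      hCzdef, pencilCol, Matrix.fromCols_mul_fromRows, Matrix.mul_one,
      Matrix.conjTranspose_zero, Matrix.zero_mul, add_zero]
  have hdiff : pencil H0 A z - (pencil H0 A ζ)ᴴ
      = (H0 - H0ᴴ) + ∑ k, (z k - (starRingEnd ℂ) (ζ k)) • A k := by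
    have hsum : (∑ k, ζ k • A k)ᴴ = ∑ k, (starRingEnd ℂ) (ζ k) • A k := by
      rw [Matrix.conjTranspose_sum]
      refine Finset.sum_congr rfl fun k _ => ?_
      rw [Matrix.conjTranspose_smul, (hA k).1.eq]
      rfl
    have hsub : (∑ k, z k • A k) - (∑ k, (starRingEnd ℂ) (ζ k) • A k)
        = ∑ k, (z k - (starRingEnd ℂ) (ζ k)) • A k := by
      rw [← Finset.sum_sub_distrib]
      exact Finset.sum_congr rfl fun k _ => (sub_smul _ _ _).symm
    rw [pencil, pencil, Matrix.conjTranspose_add, hsum, ← hsub]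
    abel
  have main : f z - (f ζ)ᴴ
      = Cζᴴ * ((H0 - H0ᴴ) * Cz)
        + ∑ k, (z k - (starRingEnd ℂ) (ζ k)) • (Cζᴴ * (A k * Cz)) := by
    rw [← h1, ← h2, Matrix.conjTranspose_mul]
    have hfac : Cζᴴ * (pencil H0 A z * Cz) - Cζᴴ * (pencil H0 A ζ)ᴴ * Cz
        = Cζᴴ * (pencil H0 A z - (pencil H0 A ζ)ᴴ) * Cz := by
      simp only [Matrix.mul_sub, Matrix.sub_mul, Matrix.mul_assoc]
    rw [hfac, hdiff, Matrix.mul_add, Matrix.add_mul, Matrix.mul_sum, Matrix.sum_mul]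
    congr 1
    · rw [Matrix.mul_assoc]
    · exact Finset.sum_congr rfl fun k _ => by
        rw [Matrix.mul_smul, Matrix.smul_mul, Matrix.mul_assoc]
  rw [main, smul_add, Finset.smul_sum]
  congr 1
  · rw [hθ0, hθ0, ← hCzdef, ← hCζdef, Matrix.conjTranspose_mul]
    simp only [Matrix.mul_assoc]
    rw [← Matrix.mul_assoc B0ᴴ B0 Cz, hB0, imPart, Matrix.smul_mul, Matrix.mul_smul]
  · refine Finset.sum_congr rfl fun k _ => ?_
    rw [hθ, hθ, ← hCzdef, ← hCζdef, Matrix.conjTranspose_mul]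
    simp only [Matrix.mul_assoc]
    rw [← Matrix.mul_assoc (B k)ᴴ (B k) Cz, hB k, smul_smul, div_eq_mul_inv,
      mul_comm ((2 * Complex.I)⁻¹)]
end
end

section
/- If f(z) = P(z)/q(z) is a rational ℂ^{m×m}-valued Cayley inner function of the Pick class ℐ𝒫_d^{m×m}, then each partial Wronskian W_k[q, P](z) = q(z)·∂P/∂z_k(z) − P(z)·∂q/∂z_k(z), k = 1, …, d, is a positive semidefinite (PSD) matrix-valued polynomial, i.e., W_k[q, P](x) ⪰ 0 for every x ∈ ℝ^d. -/
open Matrix MvPolynomial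
open scoped ComplexOrder

noncomputable section

/-- Conjugation of the coefficients of a polynomial; `eval z (conjPoly p) = conj (p(z̄))`. -/
def conjPoly {d : ℕ} (p : MvPolynomial (Fin d) ℂ) : MvPolynomial (Fin d) ℂ :=
  MvPolynomial.map (starRingEnd ℂ) p

/-- The partial Wronskian `W_k[q,P] = q ∂P/∂z_k − P ∂q/∂z_k` (a matrix of polynomials). -/
def wronskian {d m : ℕ} (q : MvPolynomial (Fin d) ℂ)
    (P : Matrix (Fin m) (Fin m) (MvPolynomial (Fin d) ℂ)) (k : Fin d) :
    Matrix (Fin m) (Fin m) (MvPolynomial (Fin d) ℂ) :=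
  Matrix.of fun i j => q * pderiv k (P i j) - P i j * pderiv k q

variable {d m : ℕ}

lemma conj_eval (p : MvPolynomial (Fin d) ℂ) (z : Fin d → ℂ) :
    (starRingEnd ℂ) (eval (fun i => (starRingEnd ℂ) (z i)) p) = eval z (conjPoly p) := by
  rw [conjPoly, eval_map]
  calc (starRingEnd ℂ) (eval (fun i => (starRingEnd ℂ) (z i)) p)
      = (starRingEnd ℂ) (eval₂ (RingHom.id ℂ) (fun i => (starRingEnd ℂ) (z i)) p) := by
        rw [MvPolynomial.eval₂_id]
    _ = eval₂ ((starRingEnd ℂ).comp (RingHom.id ℂ))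
          ((starRingEnd ℂ) ∘ fun i => (starRingEnd ℂ) (z i)) p := eval₂_comp_left _ _ _ _
    _ = eval₂ (starRingEnd ℂ) z p := by
        rw [RingHom.comp_id]
        congr 1
        funext i
        simp

/-- conj of eval at a self-conjugate point. -/
lemma conj_eval_real (p : MvPolynomial (Fin d) ℂ) (z : Fin d → ℂ)
    (hz : ∀ i, (starRingEnd ℂ) (z i) = z i) :
    (starRingEnd ℂ) (eval z p) = eval z (conjPoly p) := by
  have := conj_eval p z
  rwa [show (fun i => (starRingEnd ℂ) (z i)) = z from funext hz] at this

lemma continuous_mveval (p : MvPolynomial (Fin d) ℂ) :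
    Continuous fun z : Fin d → ℂ => eval z p := by
  induction p using MvPolynomial.induction_on with
  | C c => simpa using continuous_const
  | add p q hp hq => simpa using hp.fun_add hq
  | mul_X p j hp => simpa using hp.fun_mul (continuous_apply j)

lemma hasDerivAt_evalLine (p : MvPolynomial (Fin d) ℂ) (x : Fin d → ℂ) (k : Fin d) (w : ℂ) :
    HasDerivAt (fun w : ℂ => eval (fun t => x t + if t = k then w else 0) p)
      (eval (fun t => x t + if t = k then w else 0) (pderiv k p)) w := by
  induction p using MvPolynomial.induction_on with
  | C c => simpa [pderiv_C] using
      hasDerivAt_const w (eval (fun t => x t + if t = k then w else 0) (C c))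
  | add p q hp hq => simpa using hp.fun_add hq
  | mul_X p j hp =>
    have hX : HasDerivAt (fun w : ℂ => x j + if j = k then w else 0)
        (if j = k then 1 else 0) w := by
      by_cases h : j = k
      · simpa [h] using (hasDerivAt_id w).const_add (x j)
      · simpa [h] using hasDerivAt_const w (x j + 0)
    have := hp.fun_mul hX
    by_cases h : j = k
    · subst h
      simpa [pderiv_mul, mul_comm, mul_assoc, mul_left_comm, add_comm] using this
    · have hne : ¬ k = j := fun hh => h hh.symm
      simpa [pderiv_mul, h, hne, mul_comm, mul_assoc, mul_left_comm] using this

/-- quadratic form expansion -/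
lemma quad_expand (N : Matrix (Fin m) (Fin m) ℂ) (v : Fin m → ℂ) :
    dotProduct (star v) (N *ᵥ v) =
      ∑ i, ∑ j, (starRingEnd ℂ) (v i) * N i j * v j := by
  simp [dotProduct, mulVec, Finset.mul_sum, mul_assoc]

lemma quad_conjTranspose (N : Matrix (Fin m) (Fin m) ℂ) (v : Fin m → ℂ) :
    dotProduct (star v) (Nᴴ *ᵥ v) = (starRingEnd ℂ) (dotProduct (star v) (N *ᵥ v)) := by
  rw [quad_expand, quad_expand, map_sum, Finset.sum_comm]
  refine Finset.sum_congr rfl fun i _ => ?_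
  rw [map_sum]
  refine Finset.sum_congr rfl fun j _ => ?_
  simp [conjTranspose_apply, _root_.map_mul]
  ring

lemma im_nonneg_of_psd (M : Matrix (Fin m) (Fin m) ℂ) (h : (imPart M).PosSemidef)
    (v : Fin m → ℂ) : 0 ≤ (dotProduct (star v) (M *ᵥ v)).im := by
  have h2 := h.dotProduct_mulVec_nonneg v
  set c := dotProduct (star v) (M *ᵥ v) with hc
  have : dotProduct (star v) (imPart M *ᵥ v) = (c.im : ℂ) := by
    have hsub : dotProduct (star v) ((M - Mᴴ) *ᵥ v) = c - (starRingEnd ℂ) c := by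
      rw [Matrix.sub_mulVec, dotProduct_sub, quad_conjTranspose]
    rw [imPart, Matrix.smul_mulVec, dotProduct_smul, smul_eq_mul, hsub,
      Complex.sub_conj]
    have h2I : (2 * Complex.I) ≠ 0 := by simp [Complex.I_ne_zero]
    field_simp
    push_cast
    ring
  rw [this] at h2
  exact Complex.zero_le_real.mp h2

/-- the segment `x + w e_k`. -/
def lineMap' (x : Fin d → ℂ) (k : Fin d) (w : ℂ) : Fin d → ℂ :=
  fun t => x t + if t = k then w else 0

/-- scalar quadratic form of the numerator. -/
def Sfun (P : Matrix (Fin m) (Fin m) (MvPolynomial (Fin d) ℂ)) (v : Fin m → ℂ)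
    (z : Fin d → ℂ) : ℂ :=
  ∑ i, ∑ j, (starRingEnd ℂ) (v i) * eval z (P i j) * v j

lemma Sfun_continuous (P : Matrix (Fin m) (Fin m) (MvPolynomial (Fin d) ℂ)) (v : Fin m → ℂ) :
    Continuous (Sfun P v) := by
  apply continuous_finset_sum
  intro i _
  apply continuous_finset_sum
  intro j _
  exact (continuous_const.mul (continuous_mveval (P i j))).mul continuous_const

lemma Sfun_real (P : Matrix (Fin m) (Fin m) (MvPolynomial (Fin d) ℂ))
    (hP : ∀ i j, conjPoly (P i j) = P j i) (v : Fin m → ℂ) (z : Fin d → ℂ)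
    (hz : ∀ i, (starRingEnd ℂ) (z i) = z i) :
    (starRingEnd ℂ) (Sfun P v z) = Sfun P v z := by
  unfold Sfun
  rw [map_sum, Finset.sum_comm]
  refine Finset.sum_congr rfl fun i _ => ?_
  rw [map_sum]
  refine Finset.sum_congr rfl fun j _ => ?_
  rw [_root_.map_mul, _root_.map_mul, conj_eval_real _ _ hz, hP]
  ring_nf
  simp [mul_comm, mul_left_comm]

lemma quad_f (P : Matrix (Fin m) (Fin m) (MvPolynomial (Fin d) ℂ))
    (q : MvPolynomial (Fin d) ℂ)
    (f : (Fin d → ℂ) → Matrix (Fin m) (Fin m) ℂ)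
    (hfdef : ∀ z, f z = (eval z q)⁻¹ • Matrix.of fun i j => eval z (P i j))
    (v : Fin m → ℂ) (z : Fin d → ℂ) :
    dotProduct (star v) ((f z) *ᵥ v) = (eval z q)⁻¹ * Sfun P v z := by
  rw [hfdef z, quad_expand, Sfun, Finset.mul_sum]
  refine Finset.sum_congr rfl fun i _ => ?_
  rw [Finset.mul_sum]
  refine Finset.sum_congr rfl fun j _ => ?_
  simp [Matrix.smul_apply, smul_eq_mul]
  ring

lemma key_pointwise
    (P : Matrix (Fin m) (Fin m) (MvPolynomial (Fin d) ℂ))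
    (q : MvPolynomial (Fin d) ℂ)
    (hq : conjPoly q = q)
    (hP : ∀ i j, conjPoly (P i j) = P j i)
    (f : (Fin d → ℂ) → Matrix (Fin m) (Fin m) ℂ)
    (hfdef : ∀ z, f z = (eval z q)⁻¹ • Matrix.of fun i j => eval z (P i j))
    (hfpick : ∀ z ∈ UHP (Fin d), (imPart (f z)).PosSemidef)
    (k : Fin d) (x : Fin d → ℝ)
    (hx : eval (fun t => (x t : ℂ)) q ≠ 0) (v : Fin m → ℂ) :
    0 ≤ dotProduct (star v)
      ((Matrix.of fun i j => eval (fun t => (x t : ℂ)) (wronskian q P k i j)) *ᵥ v) := by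
  classical
  set x' : Fin d → ℂ := fun t => (x t : ℂ) with hx'
  have hL0 : lineMap' x' k 0 = x' := by
    funext t; simp [lineMap']
  set a : ℂ → ℂ := fun w => Sfun P v (lineMap' x' k w) with ha
  set b : ℂ → ℂ := fun w => eval (lineMap' x' k w) q with hbdef
  set α' : ℂ := ∑ i, ∑ j, (starRingEnd ℂ) (v i) * eval x' (pderiv k (P i j)) * v j with hα'
  set β' : ℂ := eval x' (pderiv k q) with hβ'
  have hb0 : b 0 = eval x' q := by rw [hbdef]; simp only [hL0]
  have ha0 : a 0 = Sfun P v x' := by rw [ha]; simp only [hL0]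
  have hβ : b 0 ≠ 0 := by rw [hb0]; exact hx
  -- derivatives at 0
  have hbd : HasDerivAt b β' 0 := by
    have h := hasDerivAt_evalLine q x' k 0
    rw [show (fun t => x' t + if t = k then (0:ℂ) else 0) = x' from hL0] at h
    exact h
  have had : HasDerivAt a α' 0 := by
    rw [hα']
    apply HasDerivAt.fun_sum
    intro i _
    apply HasDerivAt.fun_sum
    intro j _
    have h := ((hasDerivAt_evalLine (P i j) x' k 0).const_mul
      ((starRingEnd ℂ) (v i))).mul_const (v j)
    rw [show (fun t => x' t + if t = k then (0:ℂ) else 0) = x' from hL0] at h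
    simp only [mul_assoc] at h ⊢
    exact h
  -- self-conjugacy of real points on the line
  have hLreal : ∀ s : ℝ, ∀ t, (starRingEnd ℂ) (lineMap' x' k (s : ℂ) t) = lineMap' x' k s t := by
    intro s t
    simp [lineMap', hx', apply_ite (starRingEnd ℂ), Complex.conj_ofReal]
  have hx'real : ∀ t, (starRingEnd ℂ) (x' t) = x' t := by
    intro t; simp [hx', Complex.conj_ofReal]
  -- realness of a, b on the real axis and of the derivative values
  have hb0im : (b 0).im = 0 := by
    have : (starRingEnd ℂ) (b 0) = b 0 := by
      rw [hb0, conj_eval_real _ _ hx'real, hq]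
    exact Complex.conj_eq_iff_im.mp this
  have ha0im : (a 0).im = 0 := by
    have : (starRingEnd ℂ) (a 0) = a 0 := by
      rw [ha0]; exact Sfun_real P hP v x' hx'real
    exact Complex.conj_eq_iff_im.mp this
  have hconjpd : ∀ p : MvPolynomial (Fin d) ℂ, conjPoly (pderiv k p) = pderiv k (conjPoly p) :=
    fun p => (pderiv_map).symm
  have hβ'im : β'.im = 0 := by
    have : (starRingEnd ℂ) β' = β' := by
      rw [hβ', conj_eval_real _ _ hx'real, hconjpd, hq]
    exact Complex.conj_eq_iff_im.mp this
  have hα'im : α'.im = 0 := by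
    have : (starRingEnd ℂ) α' = α' := by
      have hPP : ∀ i j, conjPoly (pderiv k (P i j)) = pderiv k (P j i) := by
        intro i j; rw [hconjpd, hP]
      rw [hα', map_sum, Finset.sum_comm]
      refine Finset.sum_congr rfl fun i _ => ?_
      rw [map_sum]
      refine Finset.sum_congr rfl fun j _ => ?_
      rw [_root_.map_mul, _root_.map_mul, conj_eval_real _ _ hx'real, hPP]
      ring_nf
      simp [mul_comm, mul_left_comm]
    exact Complex.conj_eq_iff_im.mp this
  -- positivity of Im(a/b) on the imaginary axis
  have hpos : ∀ t : ℝ, 0 < t → b (Complex.I * t) ≠ 0 →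
      0 ≤ ((b (Complex.I * t))⁻¹ * a (Complex.I * t)).im := by
    intro t ht hbt
    set w : ℂ := Complex.I * t with hw
    set Z : ℝ → Fin d → ℂ := fun ε s => lineMap' x' k w s + ε * Complex.I with hZdef
    have hZ0 : Z 0 = lineMap' x' k w := by funext s; simp [hZdef]
    have hmem : ∀ ε : ℝ, 0 < ε → Z ε ∈ UHP (Fin d) := by
      intro ε hε s
      show 0 < (Z ε s).im
      rw [hZdef]
      simp only [lineMap', hw, hx', Complex.add_im, Complex.ofReal_im, Complex.mul_im,
        Complex.I_im, Complex.I_re, Complex.ofReal_re, Complex.ofReal_im]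
      by_cases h : s = k <;> simp [h] <;> linarith
    have hZcont : Continuous Z := by
      apply continuous_pi
      intro s
      exact continuous_const.add (Complex.continuous_ofReal.mul continuous_const)
    have hZtend : Filter.Tendsto Z (nhdsWithin (0:ℝ) (Set.Ioi 0)) (nhds (lineMap' x' k w)) := by
      have h2 : nhdsWithin (0:ℝ) (Set.Ioi 0) ≤ nhds 0 := nhdsWithin_le_nhds
      have := (hZcont.tendsto 0).mono_left h2
      rwa [hZ0] at this
    have hT : Filter.Tendsto (fun ε : ℝ => (eval (Z ε) q)⁻¹ * Sfun P v (Z ε))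
        (nhdsWithin (0:ℝ) (Set.Ioi 0)) (nhds ((b w)⁻¹ * a w)) := by
      have h1 : Filter.Tendsto (fun ε : ℝ => eval (Z ε) q)
          (nhdsWithin (0:ℝ) (Set.Ioi 0)) (nhds (b w)) :=
        ((continuous_mveval q).tendsto _).comp hZtend
      have h2 : Filter.Tendsto (fun ε : ℝ => Sfun P v (Z ε))
          (nhdsWithin (0:ℝ) (Set.Ioi 0)) (nhds (a w)) :=
        ((Sfun_continuous P v).tendsto _).comp hZtend
      exact (h1.inv₀ hbt).mul h2
    have hTim : Filter.Tendsto (fun ε : ℝ => ((eval (Z ε) q)⁻¹ * Sfun P v (Z ε)).im)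
        (nhdsWithin (0:ℝ) (Set.Ioi 0)) (nhds (((b w)⁻¹ * a w).im)) :=
      (Complex.continuous_im.tendsto _).comp hT
    refine ge_of_tendsto hTim ?_
    filter_upwards [self_mem_nhdsWithin] with ε hε
    have h0 := im_nonneg_of_psd (f (Z ε)) (hfpick _ (hmem ε hε)) v
    rwa [quad_f P q f hfdef v (Z ε)] at h0
  -- eventually b(it) ≠ 0
  have hItend : Filter.Tendsto (fun t : ℝ => Complex.I * t)
      (nhdsWithin (0:ℝ) (Set.Ioi 0)) (nhds (0:ℂ)) := by
    have : Continuous (fun t : ℝ => Complex.I * (t:ℂ)) :=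
      continuous_const.mul Complex.continuous_ofReal
    have h2 : nhdsWithin (0:ℝ) (Set.Ioi 0) ≤ nhds 0 := nhdsWithin_le_nhds
    have := (this.tendsto 0).mono_left h2
    simpa using this
  have hbne : ∀ᶠ t : ℝ in nhdsWithin (0:ℝ) (Set.Ioi 0), b (Complex.I * t) ≠ 0 := by
    have h1 : ∀ᶠ w : ℂ in nhds 0, b w ≠ 0 := hbd.continuousAt.eventually_ne hβ
    exact hItend.eventually h1
  -- the derivative of a/b at 0
  set c0 : ℂ := (α' * b 0 - a 0 * β') / (b 0) ^ 2 with hc0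
  have hg : HasDerivAt (fun w => a w / b w) c0 0 := had.div hbd hβ
  have hIne : Filter.Tendsto (fun t : ℝ => Complex.I * t)
      (nhdsWithin (0:ℝ) (Set.Ioi 0)) (nhdsWithin (0:ℂ) {(0:ℂ)}ᶜ) := by
    rw [tendsto_nhdsWithin_iff]
    refine ⟨hItend, ?_⟩
    filter_upwards [self_mem_nhdsWithin] with t ht
    have : (t:ℂ) ≠ 0 := by
      simpa using ne_of_gt ht
    simp [Complex.I_ne_zero, this]
  have hslope : Filter.Tendsto
      (fun t : ℝ => slope (fun w => a w / b w) 0 (Complex.I * t))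
      (nhdsWithin (0:ℝ) (Set.Ioi 0)) (nhds c0) :=
    (hasDerivAt_iff_tendsto_slope.mp hg).comp hIne
  have hre : Filter.Tendsto
      (fun t : ℝ => (slope (fun w => a w / b w) 0 (Complex.I * t)).re)
      (nhdsWithin (0:ℝ) (Set.Ioi 0)) (nhds c0.re) :=
    (Complex.continuous_re.tendsto _).comp hslope
  have hg0im : ((fun w => a w / b w) 0).im = 0 := by
    simp only [Complex.div_im, ha0im, hb0im]
    simp
  have hc0re : 0 ≤ c0.re := by
    refine ge_of_tendsto hre ?_
    filter_upwards [hbne, self_mem_nhdsWithin] with t hbt ht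
    have hslope_eq : slope (fun w => a w / b w) 0 (Complex.I * t)
        = (a (Complex.I * t) / b (Complex.I * t) - a 0 / b 0) / (Complex.I * t) := by
      rw [slope_def_field]
      simp
    rw [hslope_eq]
    have hIt : (Complex.I * (t:ℂ)).re = 0 ∧ (Complex.I * (t:ℂ)).im = t := by
      constructor <;> simp
    rw [Complex.div_re]
    have hnormSq : Complex.normSq (Complex.I * t) = t * t := by
      simp [Complex.normSq_apply]
    rw [hIt.1, hIt.2, hnormSq]
    have him : 0 ≤ (a (Complex.I * t) / b (Complex.I * t) - a 0 / b 0).im := by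
      rw [Complex.sub_im, hg0im]
      have := hpos t ht hbt
      rw [div_eq_mul_inv, mul_comm]
      simpa using this
    have ht' : (0:ℝ) < t * t := mul_pos ht ht
    have h1 : (a (Complex.I * ↑t) / b (Complex.I * ↑t) - a 0 / b 0).re * 0 / (t * t) = 0 := by
      ring
    rw [h1]
    have := div_nonneg (mul_nonneg him (le_of_lt ht)) (le_of_lt ht')
    linarith [this]
  have hc0im : c0.im = 0 := by
    rw [hc0, Complex.div_im]
    have hnum : (α' * b 0 - a 0 * β').im = 0 := by
      simp [Complex.sub_im, Complex.mul_im, hα'im, hβ'im, ha0im, hb0im]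
    have hnum' : (α' * b 0 - a 0 * β').re * ((b 0) ^ 2).im = 0 := by
      have : ((b 0) ^ 2).im = 0 := by
        simp [pow_two, Complex.mul_im, hb0im]
      rw [this, mul_zero]
    rw [hnum]
    simp only [zero_mul, zero_div, zero_sub, neg_eq_zero]
    rw [div_eq_zero_iff]
    left
    exact hnum'
  -- the target equals b0 * α' - a0 * β' = c0 * b0^2
  have htarget : dotProduct (star v)
      ((Matrix.of fun i j => eval x' (wronskian q P k i j)) *ᵥ v)
      = b 0 * α' - a 0 * β' := by
    rw [quad_expand]
    have expand : ∀ i j, (starRingEnd ℂ) (v i) * eval x' (wronskian q P k i j) * v j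
        = b 0 * ((starRingEnd ℂ) (v i) * eval x' (pderiv k (P i j)) * v j)
          - ((starRingEnd ℂ) (v i) * eval x' (P i j) * v j) * β' := by
      intro i j
      have hW : eval x' (wronskian q P k i j)
          = eval x' q * eval x' (pderiv k (P i j)) - eval x' (P i j) * eval x' (pderiv k q) := by
        simp [wronskian]
      rw [hW, hb0, hβ']
      ring
    calc (∑ i, ∑ j, (starRingEnd ℂ) (v i) * eval x' (wronskian q P k i j) * v j)
        = ∑ i, ∑ j, (b 0 * ((starRingEnd ℂ) (v i) * eval x' (pderiv k (P i j)) * v j)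
            - ((starRingEnd ℂ) (v i) * eval x' (P i j) * v j) * β') :=
          Finset.sum_congr rfl fun i _ => Finset.sum_congr rfl fun j _ => expand i j
      _ = b 0 * α' - a 0 * β' := by
          rw [hα', ha0, Sfun]
          simp [Finset.sum_sub_distrib, Finset.mul_sum, Finset.sum_mul]
  rw [htarget]
  have : b 0 * α' - a 0 * β' = c0 * (b 0) ^ 2 := by
    rw [hc0]
    field_simp
  rw [this]
  have hb2re : ((b 0) ^ 2).re = (b 0).re ^ 2 := by
    simp [pow_two, Complex.mul_re, hb0im]
  have hb2im : ((b 0) ^ 2).im = 0 := by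
    simp [pow_two, Complex.mul_im, hb0im]
  rw [Complex.le_def]
  constructor
  · rw [Complex.zero_re, Complex.mul_re, hc0im, hb2re, hb2im]
    simpa using mul_nonneg hc0re (sq_nonneg (b 0).re)
  · rw [Complex.zero_im, Complex.mul_im, hc0im, hb2im]
    ring

lemma wronskian_herm (P : Matrix (Fin m) (Fin m) (MvPolynomial (Fin d) ℂ))
    (q : MvPolynomial (Fin d) ℂ) (hq : conjPoly q = q)
    (hP : ∀ i j, conjPoly (P i j) = P j i) (k : Fin d) (x : Fin d → ℝ) :
    (Matrix.of fun i j => eval (fun t => (x t : ℂ)) (wronskian q P k i j)).IsHermitian := by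
  have hx'real : ∀ t, (starRingEnd ℂ) ((x t : ℂ)) = (x t : ℂ) := fun t => Complex.conj_ofReal _
  show _ᴴ = _
  ext i j
  rw [conjTranspose_apply, Matrix.of_apply, Matrix.of_apply]
  show (starRingEnd ℂ) (eval (fun t => (x t : ℂ)) (wronskian q P k j i)) = _
  rw [conj_eval_real _ _ hx'real]
  congr 1
  show conjPoly (q * pderiv k (P j i) - P j i * pderiv k q) = _
  rw [conjPoly, map_sub, _root_.map_mul, _root_.map_mul]
  have h1 : MvPolynomial.map (starRingEnd ℂ) q = q := hq
  have h2 : MvPolynomial.map (starRingEnd ℂ) (pderiv k (P j i)) = pderiv k (P i j) := by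
    rw [← pderiv_map]
    have : MvPolynomial.map (starRingEnd ℂ) (P j i) = P i j := hP j i
    rw [this]
  have h3 : MvPolynomial.map (starRingEnd ℂ) (P j i) = P i j := hP j i
  have h4 : MvPolynomial.map (starRingEnd ℂ) (pderiv k q) = pderiv k q := by
    rw [← pderiv_map]
    have : MvPolynomial.map (starRingEnd ℂ) q = q := hq
    rw [this]
  rw [h1, h2, h3, h4]
  rfl

lemma exists_real_point {q : MvPolynomial (Fin d) ℂ} (hq : conjPoly q = q) (hq0 : q ≠ 0) :
    ∃ y : Fin d → ℝ, eval (fun t => (y t : ℂ)) q ≠ 0 := by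
  have hcoeff : ∀ mo : Fin d →₀ ℕ, (q.coeff mo).im = 0 := by
    intro mo
    have := congrArg (fun p => MvPolynomial.coeff mo p) hq
    simp only [conjPoly, coeff_map] at this
    exact Complex.conj_eq_iff_im.mp this
  set r : MvPolynomial (Fin d) ℝ :=
    ∑ mo ∈ q.support, monomial mo ((q.coeff mo).re) with hr
  have hmap : MvPolynomial.map (algebraMap ℝ ℂ) r = q := by
    rw [hr, map_sum]
    have heach : ∀ mo ∈ q.support,
        MvPolynomial.map (algebraMap ℝ ℂ) (monomial mo ((q.coeff mo).re))
          = monomial mo (q.coeff mo) := by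
      intro mo _
      rw [map_monomial]
      congr 1
      exact Complex.ext (by simp) (by simp [hcoeff mo])
    rw [Finset.sum_congr rfl heach]
    exact (as_sum q).symm
  have hr0 : r ≠ 0 := by
    intro h
    apply hq0
    rw [← hmap, h, map_zero]
  by_contra hcon
  push_neg at hcon
  apply hr0
  apply MvPolynomial.funext (q := 0)
  intro y
  rw [map_zero]
  have he : eval (fun t => ((y t : ℝ) : ℂ)) q = ((eval y r : ℝ) : ℂ) := by
    rw [← hmap, eval_map]
    have h0 := eval₂_comp_left (algebraMap ℝ ℂ) (RingHom.id ℝ) y r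
    rw [MvPolynomial.eval₂_id, RingHom.comp_id] at h0
    have h2 : (⇑(algebraMap ℝ ℂ) ∘ y) = fun t => ((y t : ℝ) : ℂ) := by
      funext t
      simp
    rw [h2] at h0
    rw [← h0]
    simp
  have h := hcon y
  rw [he] at h
  exact_mod_cast h

/-- evaluation of a multivariate polynomial along an affine line, as a 1-variable polynomial -/
lemma line_eval (p : MvPolynomial (Fin d) ℂ) (c e : Fin d → ℂ) (t : ℂ) :
    Polynomial.eval t (eval₂ (Polynomial.C : ℂ →+* Polynomial ℂ)
        (fun s => Polynomial.C (c s) + Polynomial.C (e s) * Polynomial.X) p)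
      = eval (fun s => c s + e s * t) p := by
  have h := eval₂_comp_left (Polynomial.evalRingHom t) (Polynomial.C : ℂ →+* Polynomial ℂ)
    (fun s => Polynomial.C (c s) + Polynomial.C (e s) * Polynomial.X) p
  rw [show Polynomial.eval t (eval₂ (Polynomial.C : ℂ →+* Polynomial ℂ)
      (fun s => Polynomial.C (c s) + Polynomial.C (e s) * Polynomial.X) p)
    = (Polynomial.evalRingHom t) (eval₂ (Polynomial.C : ℂ →+* Polynomial ℂ)
      (fun s => Polynomial.C (c s) + Polynomial.C (e s) * Polynomial.X) p) from rfl, h]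
  have h1 : (Polynomial.evalRingHom t).comp (Polynomial.C : ℂ →+* Polynomial ℂ)
      = RingHom.id ℂ := by
    ext z
    simp
  have h2 : ((Polynomial.evalRingHom t) ∘
      fun s => Polynomial.C (c s) + Polynomial.C (e s) * Polynomial.X)
      = fun s => c s + e s * t := by
    funext s
    simp
  rw [h1, h2, MvPolynomial.eval₂_id]


set_option maxHeartbeats 1000000 in
/-- for a rational Cayley inner function `f = P/q` of the Pick class
(written, as one always may, with a real-coefficient denominator `q` and Hermitian
coefficient matrices for `P`), every partial Wronskian `W_k[q,P]` is a positive
semidefinite matrix-valued polynomial on `ℝ^d`. -/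
theorem wronskians_PSD (d m : ℕ)
    (P : Matrix (Fin m) (Fin m) (MvPolynomial (Fin d) ℂ))
    (q : MvPolynomial (Fin d) ℂ)
    -- Cayley inner normalization: `q(z̄)‾ = q(z)` and `P(z̄)* = P(z)`
    (hq : conjPoly q = q)
    (hP : ∀ i j, conjPoly (P i j) = P j i)
    (f : (Fin d → ℂ) → Matrix (Fin m) (Fin m) ℂ)
    (hfdef : ∀ z, f z = (eval z q)⁻¹ • Matrix.of fun i j => eval z (P i j))
    -- `f` belongs to the Pick class `𝒫_d^{m×m}` :
    (hfhol : ∀ i j, DifferentiableOn ℂ (fun z => f z i j) (UHP (Fin d)))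
    (hfpick : ∀ z ∈ UHP (Fin d), (imPart (f z)).PosSemidef)
    -- `f` is Cayley inner: Hermitian values at real points where it is defined :
    (hherm : ∀ x : Fin d → ℝ, eval (fun t => (x t : ℂ)) q ≠ 0 →
      (f fun t => (x t : ℂ)).IsHermitian) :
    ∀ (k : Fin d) (x : Fin d → ℝ),
      (Matrix.of fun i j => eval (fun t => (x t : ℂ)) (wronskian q P k i j)).PosSemidef := by
  intro k x
  refine Matrix.PosSemidef.of_dotProduct_mulVec_nonneg (wronskian_herm P q hq hP k x) ?_
  intro v
  by_cases hq0 : q = 0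
  · have hz : (Matrix.of fun i j => eval (fun t => (x t : ℂ)) (wronskian q P k i j))
        = (0 : Matrix (Fin m) (Fin m) ℂ) := by
      ext i j
      simp [wronskian, hq0]
    rw [hz]
    simp
  obtain ⟨y, hy⟩ := exists_real_point hq hq0
  set pt : ℝ → Fin d → ℝ := fun t s => x s + t * (y s - x s) with hpt
  have hpt0 : pt 0 = x := by funext s; simp [hpt]
  have hpt1 : pt 1 = y := by funext s; simp [hpt]
  set F : ℝ → ℂ := fun t => dotProduct (star v)
      ((Matrix.of fun i j => eval (fun s => ((pt t s : ℝ) : ℂ)) (wronskian q P k i j)) *ᵥ v)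
    with hF
  have hptc : Continuous (fun t : ℝ => fun s => ((pt t s : ℝ) : ℂ)) := by
    apply continuous_pi
    intro s
    exact Complex.continuous_ofReal.comp
      (continuous_const.add (continuous_id.mul continuous_const))
  have hFc : Continuous F := by
    have hFeq : F = fun t => ∑ i, ∑ j, (starRingEnd ℂ) (v i)
        * eval (fun s => ((pt t s : ℝ) : ℂ)) (wronskian q P k i j) * v j := by
      funext t
      rw [hF]
      exact quad_expand _ v
    rw [hFeq]
    apply continuous_finset_sum
    intro i _
    apply continuous_finset_sum
    intro j _
    exact (continuous_const.mul
      ((continuous_mveval (wronskian q P k i j)).comp hptc)).mul continuous_const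
  -- the 1-variable polynomial along the line from x to y
  set u : Polynomial ℂ := eval₂ (Polynomial.C : ℂ →+* Polynomial ℂ)
      (fun s => Polynomial.C ((x s : ℂ)) + Polynomial.C (((y s : ℝ) : ℂ) - (x s : ℂ))
        * Polynomial.X) q with hu
  have hueval : ∀ t : ℝ, Polynomial.eval (t : ℂ) u
      = eval (fun s => ((pt t s : ℝ) : ℂ)) q := by
    intro t
    have harg : (fun s => ((pt t s : ℝ) : ℂ))
        = fun s => (x s : ℂ) + (((y s : ℝ) : ℂ) - (x s : ℂ)) * (t : ℂ) := by
      funext s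
      rw [hpt]
      push_cast
      ring
    rw [hu, line_eval, harg]
  have hu0 : u ≠ 0 := by
    intro h
    apply hy
    have := hueval 1
    rw [h] at this
    simp only [Polynomial.eval_zero] at this
    rw [hpt1] at this
    exact this.symm
  have hroots : {t : ℝ | Polynomial.IsRoot u ((t : ℝ) : ℂ)}.Finite := by
    have h1 := Polynomial.finite_setOf_isRoot hu0
    exact h1.preimage (Set.injOn_of_injective Complex.ofReal_injective)
  -- eventually (in the punctured nbhd of 0) the denominator is nonzero
  have hev : ∀ᶠ t : ℝ in nhdsWithin 0 {(0:ℝ)}ᶜ,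
      eval (fun s => ((pt t s : ℝ) : ℂ)) q ≠ 0 := by
    have hfin : ({t : ℝ | Polynomial.IsRoot u ((t : ℝ) : ℂ)} \ {0}).Finite :=
      hroots.subset Set.diff_subset
    have hop : IsOpen (({t : ℝ | Polynomial.IsRoot u ((t : ℝ) : ℂ)} \ {0})ᶜ) :=
      hfin.isClosed.isOpen_compl
    have h0mem : (0:ℝ) ∈ (({t : ℝ | Polynomial.IsRoot u ((t : ℝ) : ℂ)} \ {0})ᶜ) := by
      simp
    have h1 : ∀ᶠ t : ℝ in nhds 0,
        t ∈ (({t : ℝ | Polynomial.IsRoot u ((t : ℝ) : ℂ)} \ {0})ᶜ) :=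
      hop.mem_nhds h0mem
    have h2 : ∀ᶠ t : ℝ in nhdsWithin 0 {(0:ℝ)}ᶜ,
        t ∈ (({t : ℝ | Polynomial.IsRoot u ((t : ℝ) : ℂ)} \ {0})ᶜ) :=
      h1.filter_mono nhdsWithin_le_nhds
    filter_upwards [h2, self_mem_nhdsWithin] with t h2t hne
    intro hzero
    apply h2t
    constructor
    · show Polynomial.IsRoot u ((t : ℝ) : ℂ)
      rw [Polynomial.IsRoot, hueval t]
      exact hzero
    · exact hne
  -- values along the line are nonnegative where the denominator is nonzero
  have hFpos : ∀ᶠ t : ℝ in nhdsWithin 0 {(0:ℝ)}ᶜ, F t ∈ {z : ℂ | 0 ≤ z} := by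
    filter_upwards [hev] with t ht
    exact key_pointwise P q hq hP f hfdef hfpick k (pt t) ht v
  have hmono : nhdsWithin (0:ℝ) {(0:ℝ)}ᶜ ≤ nhds 0 := nhdsWithin_le_nhds
  have hFt : Filter.Tendsto F (nhdsWithin 0 {(0:ℝ)}ᶜ) (nhds (F 0)) :=
    (hFc.tendsto 0).mono_left hmono
  have hcl : IsClosed {z : ℂ | 0 ≤ z} := by
    have : {z : ℂ | 0 ≤ z} = Complex.re ⁻¹' (Set.Ici 0) ∩ Complex.im ⁻¹' {0} := by
      ext z
      simp [Complex.le_def, eq_comm]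
    rw [this]
    exact (isClosed_Ici.preimage Complex.continuous_re).inter
      (isClosed_singleton.preimage Complex.continuous_im)
  clear_value F pt u
  have hfinal : F 0 ∈ {z : ℂ | 0 ≤ z} := hcl.mem_of_tendsto hFt hFpos
  have hF0 : F 0 = dotProduct (star v)
      ((Matrix.of fun i j => eval (fun t => (x t : ℂ)) (wronskian q P k i j)) *ᵥ v) := by
    rw [hF]
    simp only [hpt0]
  rw [← hF0]
  exact hfinal
end
end

section
/- Let a₁₁, a₁₂, a₁₃, a₂₁, a₂₂, a₂₃, a₃₁, a₃₂, a₃₃ be matrices of compatible block sizes and Z₁, Z₂ square matrices such that a₃₃ + Z₂ is invertible; set g₁₁ = a₁₁ − a₁₃(a₃₃+Z₂)⁻¹a₃₁, g₁₂ = a₁₂ − a₁₃(a₃₃+Z₂)⁻¹a₃₂, g₂₁ = a₂₁ − a₂₃(a₃₃+Z₂)⁻¹a₃₁, g₂₂ = a₂₂ − a₂₃(a₃₃+Z₂)⁻¹a₃₂, and suppose g₂₂ + Z₁ is invertible. Then the 2×2 block matrix [[a₂₂+Z₁, a₂₃], [a₃₂, a₃₃+Z₂]] is invertible and g₁₁ −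 g₁₂(g₂₂+Z₁)⁻¹g₂₁ = a₁₁ − (a₁₂, a₁₃) · [[a₂₂+Z₁, a₂₃], [a₃₂, a₃₃+Z₂]]⁻¹ · (a₂₁; a₃₁). -/
open Matrix

noncomputable section

/-- superposition of coefficient matrices of fractional linear
transformations of the form `W = g₁₁ − g₁₂(g₂₂+Z)⁻¹g₂₁`. -/
theorem flt_superposition (n1 n2 n3 : ℕ)
    (a11 : Matrix (Fin n1) (Fin n1) ℂ) (a12 : Matrix (Fin n1) (Fin n2) ℂ)
    (a13 : Matrix (Fin n1) (Fin n3) ℂ)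
    (a21 : Matrix (Fin n2) (Fin n1) ℂ) (a22 : Matrix (Fin n2) (Fin n2) ℂ)
    (a23 : Matrix (Fin n2) (Fin n3) ℂ)
    (a31 : Matrix (Fin n3) (Fin n1) ℂ) (a32 : Matrix (Fin n3) (Fin n2) ℂ)
    (a33 : Matrix (Fin n3) (Fin n3) ℂ)
    (Z1 : Matrix (Fin n2) (Fin n2) ℂ) (Z2 : Matrix (Fin n3) (Fin n3) ℂ)
    (hZ2 : IsUnit (a33 + Z2))
    (g11 : Matrix (Fin n1) (Fin n1) ℂ) (g12 : Matrix (Fin n1) (Fin n2) ℂ)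
    (g21 : Matrix (Fin n2) (Fin n1) ℂ) (g22 : Matrix (Fin n2) (Fin n2) ℂ)
    (hg11 : g11 = a11 - a13 * (a33 + Z2)⁻¹ * a31)
    (hg12 : g12 = a12 - a13 * (a33 + Z2)⁻¹ * a32)
    (hg21 : g21 = a21 - a23 * (a33 + Z2)⁻¹ * a31)
    (hg22 : g22 = a22 - a23 * (a33 + Z2)⁻¹ * a32)
    (hZ1 : IsUnit (g22 + Z1)) :
    IsUnit (Matrix.fromBlocks (a22 + Z1) a23 a32 (a33 + Z2)) ∧
    g11 - g12 * (g22 + Z1)⁻¹ * g21 =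
      a11 - Matrix.fromCols a12 a13 *
        (Matrix.fromBlocks (a22 + Z1) a23 a32 (a33 + Z2))⁻¹ * Matrix.fromRows a21 a31 := by
  subst hg11 hg12 hg21 hg22
  cases hZ2.nonempty_invertible
  have hSeq : a22 - a23 * (a33 + Z2)⁻¹ * a32 + Z1
      = (a22 + Z1) - a23 * ⅟(a33 + Z2) * a32 := by
    rw [invOf_eq_nonsing_inv]; abel
  rw [hSeq] at hZ1 ⊢
  cases hZ1.nonempty_invertible
  letI := fromBlocks₂₂Invertible (a22 + Z1) a23 a32 (a33 + Z2)
  refine ⟨isUnit_of_invertible _, ?_⟩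
  rw [← invOf_eq_nonsing_inv (fromBlocks (a22 + Z1) a23 a32 (a33 + Z2)),
    invOf_fromBlocks₂₂_eq, fromCols_mul_fromBlocks, fromCols_mul_fromRows,
    ← invOf_eq_nonsing_inv ((a22 + Z1) - a23 * ⅟(a33 + Z2) * a32),
    ← invOf_eq_nonsing_inv (a33 + Z2)]
  generalize ⅟((a22 + Z1) - a23 * ⅟(a33 + Z2) * a32) = S
  generalize ⅟(a33 + Z2) = D
  simp only [Matrix.sub_mul, Matrix.mul_sub, Matrix.add_mul, Matrix.mul_add, Matrix.neg_mul,
    Matrix.mul_neg, Matrix.mul_assoc, sub_eq_add_neg]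
  abel
end
end

section
/- Let B = [[B₁₁, B₁₂], [B₂₁, B₂₂]] be a constant Hermitian (m+n)×(m+n) block matrix with B₂₂ of size n×n, let Z_n = diag(0_{n₀}, z₁I_{n₁}, …, z_dI_{n_d}) with n₀ + n₁ + ⋯ + n_d = n, and suppose B₂₂ + Z_n is invertible for all z ∈ Π^d. Then f(z) = B₁₁ − B₁₂(B₂₂ + Z_n)⁻¹B₂₁ satisfies the identity (f(z) − f(z)*)/(2i) = B₂₁*·(B₂₂ + Z_n)⁻¹*·(Z_n − Z_n*)/(2i)·(B₂₂ + Z_n)⁻¹·B₂₁ for all z where the inverse exists; consequently f is a Cayley inner function of the Pick class 𝒫_d^{m×m}. -/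
open Matrix MvPolynomial
open scoped ComplexOrder

noncomputable section

/-- Index type realizing `n = n₀ + n₁ + ⋯ + n_d`. -/
abbrev ZIdx {d : ℕ} (n : Fin (d + 1) → ℕ) : Type := (k : Fin (d + 1)) × Fin (n k)

/-- `Z_n = diag(0_{n₀}, z₁ I_{n₁}, …, z_d I_{n_d})`. -/
def ZZero {d : ℕ} (n : Fin (d + 1) → ℕ) (z : Fin d → ℂ) : Matrix (ZIdx n) (ZIdx n) ℂ :=
  Matrix.diagonal fun p => Fin.cases (0 : ℂ) (fun j => z j) p.1

lemma prodDiffOn {ι : Type*} {E : Type*} [NormedAddCommGroup E] [NormedSpace ℂ E]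
    {s : Set E} (u : Finset ι) (g : ι → E → ℂ)
    (hg : ∀ i ∈ u, DifferentiableOn ℂ (g i) s) :
    DifferentiableOn ℂ (fun z => ∏ i ∈ u, g i z) s := by
  classical
  induction u using Finset.induction_on with
  | empty => simpa using differentiableOn_const (1 : ℂ)
  | insert a u' hni ih =>
    simp only [Finset.prod_insert hni]
    exact (hg a (Finset.mem_insert_self _ _)).mul
      (ih fun i hi => hg i (Finset.mem_insert_of_mem hi))

lemma detDiffOn {p : Type*} [Fintype p] [DecidableEq p] {E : Type*}
    [NormedAddCommGroup E] [NormedSpace ℂ E] {s : Set E}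
    (M : E → Matrix p p ℂ) (h : ∀ i j, DifferentiableOn ℂ (fun z => M z i j) s) :
    DifferentiableOn ℂ (fun z => (M z).det) s := by
  simp only [Matrix.det_apply']
  apply DifferentiableOn.fun_sum
  intro σ _
  exact (differentiableOn_const _).mul (prodDiffOn _ _ fun i _ => h (σ i) i)

lemma invDiffOn {p : Type*} [Fintype p] [DecidableEq p] {E : Type*}
    [NormedAddCommGroup E] [NormedSpace ℂ E] {s : Set E}
    (M : E → Matrix p p ℂ) (h : ∀ i j, DifferentiableOn ℂ (fun z => M z i j) s)
    (hu : ∀ z ∈ s, IsUnit (M z)) :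
    ∀ i j, DifferentiableOn ℂ (fun z => (M z)⁻¹ i j) s := by
  intro i j
  have hdet : DifferentiableOn ℂ (fun z => (M z).det) s := detDiffOn M h
  have hne : ∀ z ∈ s, (M z).det ≠ 0 := fun z hz =>
    ((Matrix.isUnit_iff_isUnit_det _).mp (hu z hz)).ne_zero
  have hrw : (fun z => (M z)⁻¹ i j) =
      fun z => ((M z).det)⁻¹ * (M z).adjugate i j := by
    funext z
    rw [Matrix.inv_def]
    simp [Ring.inverse_eq_inv']
  rw [hrw]
  refine (hdet.inv hne).mul ?_
  simp only [Matrix.adjugate_apply]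
  apply detDiffOn
  intro a b
  simp only [Matrix.updateRow_apply]
  by_cases hab : a = j
  · simp [hab, differentiableOn_const]
  · simpa [hab] using h a b

lemma zzeroDiff {d : ℕ} (n : Fin (d+1) → ℕ) (p q : ZIdx n) :
    Differentiable ℂ (fun z : Fin d → ℂ => ZZero n z p q) := by
  classical
  by_cases hpq : p = q
  · subst hpq
    simp only [ZZero, Matrix.diagonal_apply_eq]
    obtain ⟨k, i⟩ := p
    cases k using Fin.cases with
    | zero => simp only [Fin.cases_zero]; exact differentiable_const 0
    | succ j =>
      simp only [Fin.cases_succ]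
      exact (ContinuousLinearMap.proj j : (Fin d → ℂ) →L[ℂ] ℂ).differentiable
  · simp only [ZZero, Matrix.diagonal_apply_ne _ hpq]
    exact differentiable_const 0

/-- for a constant Hermitian block matrix `B`, the function
`f(z) = B₁₁ − B₁₂(B₂₂+Z_n)⁻¹B₂₁` satisfies
`(f(z)−f(z)*)/(2i) = B₂₁*(B₂₂+Z_n)⁻¹*((Z_n−Z_n*)/(2i))(B₂₂+Z_n)⁻¹B₂₁`
whenever the inverse exists; consequently it is a Cayley inner function of the Pick
class. -/
theorem hermitian_realization_is_cayley_inner_pick (d m : ℕ) (n : Fin (d + 1) → ℕ)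
    (B : Matrix (Fin m ⊕ ZIdx n) (Fin m ⊕ ZIdx n) ℂ)
    (hB : B.IsHermitian)
    (hinv : ∀ z ∈ UHP (Fin d), IsUnit (B.toBlocks₂₂ + ZZero n z))
    (f : (Fin d → ℂ) → Matrix (Fin m) (Fin m) ℂ)
    (hf : ∀ z, f z = B.toBlocks₁₁ -
      B.toBlocks₁₂ * (B.toBlocks₂₂ + ZZero n z)⁻¹ * B.toBlocks₂₁) :
    -- the identity, wherever the inverse exists :
    (∀ z : Fin d → ℂ, IsUnit (B.toBlocks₂₂ + ZZero n z) →
      imPart (f z) =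
        B.toBlocks₂₁ᴴ * ((B.toBlocks₂₂ + ZZero n z)⁻¹)ᴴ * imPart (ZZero n z) *
          (B.toBlocks₂₂ + ZZero n z)⁻¹ * B.toBlocks₂₁) ∧
    -- `f` belongs to the Pick class `𝒫_d^{m×m}` :
    (∀ i j, DifferentiableOn ℂ (fun z => f z i j) (UHP (Fin d))) ∧
    (∀ z ∈ UHP (Fin d), (imPart (f z)).PosSemidef) ∧
    -- and `f` is Cayley inner :
    (∀ x : Fin d → ℝ, IsUnit (B.toBlocks₂₂ + ZZero n fun t => (x t : ℂ)) →
      (f fun t => (x t : ℂ)).IsHermitian) := by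
    classical
  -- block Hermitian relations
  have h11 : B.toBlocks₁₁ᴴ = B.toBlocks₁₁ := by
    ext i j
    simpa [Matrix.toBlocks₁₁, Matrix.conjTranspose_apply] using hB.apply (Sum.inl i) (Sum.inl j)
  have h22 : B.toBlocks₂₂ᴴ = B.toBlocks₂₂ := by
    ext i j
    simpa [Matrix.toBlocks₂₂, Matrix.conjTranspose_apply] using hB.apply (Sum.inr i) (Sum.inr j)
  have h12 : B.toBlocks₁₂ᴴ = B.toBlocks₂₁ := by
    ext i j
    simpa [Matrix.toBlocks₁₂, Matrix.toBlocks₂₁, Matrix.conjTranspose_apply] using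
      hB.apply (Sum.inr i) (Sum.inl j)
  have h21 : B.toBlocks₂₁ᴴ = B.toBlocks₁₂ := by
    rw [← h12, conjTranspose_conjTranspose]
  have h12' : B.toBlocks₁₂ = B.toBlocks₂₁ᴴ := h21.symm
  -- Part 1: the identity
  have part1 : ∀ z : Fin d → ℂ, IsUnit (B.toBlocks₂₂ + ZZero n z) →
      imPart (f z) =
        B.toBlocks₂₁ᴴ * ((B.toBlocks₂₂ + ZZero n z)⁻¹)ᴴ * imPart (ZZero n z) *
          (B.toBlocks₂₂ + ZZero n z)⁻¹ * B.toBlocks₂₁ := by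
    intro z hz
    set A := B.toBlocks₂₂ + ZZero n z with hAdef
    have hd : IsUnit A.det := (Matrix.isUnit_iff_isUnit_det A).mp hz
    have hAinv : A * A⁻¹ = 1 := Matrix.mul_nonsing_inv A hd
    have hAinv' : A⁻¹ * A = 1 := Matrix.nonsing_inv_mul A hd
    have hAH : A⁻¹ᴴ * Aᴴ = 1 := by
      rw [← conjTranspose_mul, hAinv, conjTranspose_one]
    have hZA : ZZero n z - (ZZero n z)ᴴ = A - Aᴴ := by
      rw [hAdef, conjTranspose_add, h22]
      abel
    have key : B.toBlocks₂₁ᴴ * A⁻¹ᴴ * (A - Aᴴ) * A⁻¹ * B.toBlocks₂₁ =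
        B.toBlocks₂₁ᴴ * A⁻¹ᴴ * B.toBlocks₂₁ - B.toBlocks₂₁ᴴ * A⁻¹ * B.toBlocks₂₁ := by
      rw [Matrix.mul_sub, Matrix.sub_mul, Matrix.sub_mul]
      rw [Matrix.mul_assoc (B.toBlocks₂₁ᴴ * A⁻¹ᴴ) A A⁻¹, hAinv, Matrix.mul_one]
      rw [Matrix.mul_assoc B.toBlocks₂₁ᴴ A⁻¹ᴴ Aᴴ, hAH, Matrix.mul_one]
    have main : f z - (f z)ᴴ =
        B.toBlocks₂₁ᴴ * A⁻¹ᴴ * (ZZero n z - (ZZero n z)ᴴ) * A⁻¹ * B.toBlocks₂₁ := by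
      rw [hZA, key, hf]
      simp only [conjTranspose_sub, conjTranspose_mul, h11, h12, conjTranspose_conjTranspose,
        h12', ← Matrix.mul_assoc]
      abel
    show imPart (f z) = B.toBlocks₂₁ᴴ * A⁻¹ᴴ * imPart (ZZero n z) * A⁻¹ * B.toBlocks₂₁
    rw [imPart, imPart, main, Matrix.mul_smul, Matrix.smul_mul, Matrix.smul_mul]
  -- differentiability of the inverse entries
  have hent : ∀ p q, DifferentiableOn ℂ
      (fun z : Fin d → ℂ => (B.toBlocks₂₂ + ZZero n z) p q) (UHP (Fin d)) := by
    intro p q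
    simp only [Matrix.add_apply]
    exact (differentiableOn_const _).add ((zzeroDiff n p q).differentiableOn)
  have hInv : ∀ p q, DifferentiableOn ℂ
      (fun z : Fin d → ℂ => (B.toBlocks₂₂ + ZZero n z)⁻¹ p q) (UHP (Fin d)) :=
    invDiffOn _ hent hinv
  refine ⟨part1, ?_, ?_, ?_⟩
  · -- Part 2: differentiability
    intro i j
    have hrw : (fun z => f z i j) = fun z : Fin d → ℂ =>
        B.toBlocks₁₁ i j -
          ∑ q, (∑ p, B.toBlocks₁₂ i p * (B.toBlocks₂₂ + ZZero n z)⁻¹ p q) *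
            B.toBlocks₂₁ q j := by
      funext z
      rw [hf]
      simp [Matrix.sub_apply, Matrix.mul_apply]
    rw [hrw]
    refine (differentiableOn_const _).sub ?_
    refine DifferentiableOn.fun_sum fun q _ => ?_
    refine DifferentiableOn.mul ?_ (differentiableOn_const _)
    exact DifferentiableOn.fun_sum fun p _ => (differentiableOn_const _).mul (hInv p q)
  · -- Part 3: positive semidefiniteness
    intro z hz
    have hZpsd : (imPart (ZZero n z)).PosSemidef := by
      have hdiag : imPart (ZZero n z) =
          Matrix.diagonal fun p : ZIdx n =>
            (((Fin.cases (0 : ℂ) (fun j => z j) p.1 : ℂ).im : ℝ) : ℂ) := by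
        ext p q
        rcases eq_or_ne p q with h | h
        · subst h
          simp only [imPart, Matrix.smul_apply, Matrix.sub_apply, Matrix.conjTranspose_apply,
            ZZero, Matrix.diagonal_apply_eq, smul_eq_mul, RCLike.star_def]
          rw [Complex.sub_conj]
          field_simp
          push_cast
          ring
        · simp [imPart, ZZero, Matrix.diagonal_apply_ne _ h,
            Matrix.diagonal_apply_ne _ (Ne.symm h)]
      rw [hdiag]
      refine Matrix.posSemidef_diagonal_iff.mpr fun p => ?_
      obtain ⟨k, i⟩ := p
      cases k using Fin.cases with
      | zero => simp
      | succ j =>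
        simp only [Fin.cases_succ]
        exact Complex.zero_le_real.mpr (hz j).le
    have := part1 z (hinv z hz)
    rw [this]
    have hrw2 : B.toBlocks₂₁ᴴ * ((B.toBlocks₂₂ + ZZero n z)⁻¹)ᴴ * imPart (ZZero n z) *
          (B.toBlocks₂₂ + ZZero n z)⁻¹ * B.toBlocks₂₁ =
        ((B.toBlocks₂₂ + ZZero n z)⁻¹ * B.toBlocks₂₁)ᴴ * imPart (ZZero n z) *
          ((B.toBlocks₂₂ + ZZero n z)⁻¹ * B.toBlocks₂₁) := by
      rw [conjTranspose_mul, Matrix.mul_assoc (B.toBlocks₂₁ᴴ * ((B.toBlocks₂₂ + ZZero n z)⁻¹)ᴴ *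
        imPart (ZZero n z))]
    rw [hrw2]
    exact hZpsd.conjTranspose_mul_mul_same _
  · -- Part 4: Cayley inner
    intro x hx
    set A := B.toBlocks₂₂ + ZZero n fun t => (x t : ℂ) with hAdef
    have hZH : (ZZero n fun t => (x t : ℂ))ᴴ = ZZero n fun t => (x t : ℂ) := by
      ext p q
      rcases eq_or_ne p q with h | h
      · subst h
        simp only [Matrix.conjTranspose_apply, ZZero, Matrix.diagonal_apply_eq]
        obtain ⟨k, i⟩ := p
        cases k using Fin.cases with
        | zero => simp
        | succ j => simp [Fin.cases_succ, Complex.star_def, Complex.conj_ofReal]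
      · simp [ZZero, Matrix.conjTranspose_apply, Matrix.diagonal_apply_ne _ h,
          Matrix.diagonal_apply_ne _ (Ne.symm h)]
    have hAH : Aᴴ = A := by rw [hAdef, conjTranspose_add, h22, hZH]
    show (f fun t => (x t : ℂ))ᴴ = f fun t => (x t : ℂ)
    rw [hf]
    simp only [conjTranspose_sub, conjTranspose_mul, h11, h12, h12',
      conjTranspose_conjTranspose, Matrix.conjTranspose_nonsing_inv, ← hAdef, hAH, Matrix.mul_assoc]
end
end

section
/- Let F ∈ ℝ[x₁, …, x_d] be a PSD polynomial that is not a sum of squares of real polynomials, and let s ∈ ℝ[x₁, …, x_d] be an irreducible indefinite polynomial (s takes both positive and negative values on ℝ^d). Then s²F is also PSD and is not a sum of squares of real polynomials. -/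
open MvPolynomial

noncomputable section

/-- A scalar real polynomial is SOS if it is a finite sum of squares of real
polynomials. -/
def IsSOSReal {d : ℕ} (F : MvPolynomial (Fin d) ℝ) : Prop :=
  ∃ (k : ℕ) (h : Fin k → MvPolynomial (Fin d) ℝ), F = ∑ i, h i ^ 2

open Matrix


lemma zero_of_ball {e : ℕ} (p : MvPolynomial (Fin e) ℝ) (c : Fin e → ℝ) (ε : ℝ) (hε : 0 < ε)
    (h : ∀ y : Fin e → ℝ, (∀ i, |y i - c i| < ε) → eval y p = 0) : p = 0 := by
  induction e with
  | zero =>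
      have h0 : eval c p = 0 := h c (fun i => i.elim0)
      apply MvPolynomial.funext (fun x => ?_)
      rw [Subsingleton.elim x c]
      simpa using h0
  | succ n ih =>
      set q := finSuccEquiv ℝ n p with hq
      have hcoeff : ∀ k, q.coeff k = 0 := by
        intro k
        apply ih (q.coeff k) (Fin.tail c)
        intro y hy
        have hsub : Set.Ioo (c 0 - ε) (c 0 + ε) ⊆ {x | (q.map (eval y)).IsRoot x} := by
          intro t ht
          have hball : ∀ i, |(Fin.cons t y : Fin (n+1) → ℝ) i - c i| < ε := by
            intro i
            refine Fin.cases ?_ ?_ i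
            · have : |t - c 0| < ε := abs_sub_lt_iff.mpr ⟨by linarith [ht.2], by linarith [ht.1]⟩
              simpa using this
            · intro j; simpa [Fin.tail] using hy j
          have hz := h (Fin.cons t y) hball
          show Polynomial.IsRoot _ t
          rw [Polynomial.IsRoot, hq, ← eval_eq_eval_mv_eval']
          exact hz
        have hpoly : (q.map (eval y)) = 0 :=
          Polynomial.eq_zero_of_infinite_isRoot _ ((Set.Ioo_infinite (by linarith)).mono hsub)
        have := congrArg (fun r => Polynomial.coeff r k) hpoly
        simpa using this
      have hq0 : q = 0 := Polynomial.ext (by simpa using hcoeff)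
      have h2 := congrArg (finSuccEquiv ℝ n).symm hq0
      rw [hq] at h2
      simpa using h2


lemma exists_good_matrix {n : ℕ} (v : Fin (n+1) → ℝ) (hv : v ≠ 0) :
    ∃ P P' : Matrix (Fin (n+1)) (Fin (n+1)) ℝ,
      P * P' = 1 ∧ P' * P = 1 ∧ ∀ j, P 0 j = v j := by
  classical
  have hli : LinearIndepOn ℝ id ({v} : Set (Fin (n+1) → ℝ)) :=
    (linearIndepOn_singleton_iff ℝ).mpr hv
  let B0 := Module.Basis.extend hli
  letI : Fintype ↥(hli.extend (Set.subset_univ ({v} : Set (Fin (n+1) → ℝ)))) :=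
    FiniteDimensional.fintypeBasisIndex B0
  have hcard : Fintype.card ↥(hli.extend (Set.subset_univ ({v} : Set (Fin (n+1) → ℝ))))
      = n + 1 := by
    rw [← Module.finrank_eq_card_basis B0, Module.finrank_fin_fun]
  have hmem : v ∈ hli.extend (Set.subset_univ ({v} : Set (Fin (n+1) → ℝ))) :=
    hli.subset_extend _ rfl
  let e0 : Fin (n+1) ≃ ↥(hli.extend (Set.subset_univ ({v} : Set (Fin (n+1) → ℝ)))) :=
    Fintype.equivOfCardEq (by rw [hcard, Fintype.card_fin])
  let e : Fin (n+1) ≃ ↥(hli.extend (Set.subset_univ ({v} : Set (Fin (n+1) → ℝ)))) :=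
    (Equiv.swap (0 : Fin (n+1)) (e0.symm ⟨v, hmem⟩)).trans e0
  let B : Module.Basis (Fin (n+1)) ℝ (Fin (n+1) → ℝ) := B0.reindex e.symm
  have hB0 : B 0 = v := by
    have : e 0 = ⟨v, hmem⟩ := by simp [e, Equiv.swap_apply_left]
    simp [B, Module.Basis.reindex_apply, this, B0, Module.Basis.extend_apply_self]
  let M := (Pi.basisFun ℝ (Fin (n+1))).toMatrix B
  letI : Invertible M := (Pi.basisFun ℝ (Fin (n+1))).invertibleToMatrix B
  have hMentry : ∀ i j, M i j = B j i := by
    intro i j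
    simp [M, Module.Basis.toMatrix_apply, Pi.basisFun_repr]
  refine ⟨Mᵀ, (M⁻¹)ᵀ, ?_, ?_, ?_⟩
  · rw [← Matrix.transpose_mul, Matrix.inv_mul_of_invertible, Matrix.transpose_one]
  · rw [← Matrix.transpose_mul, Matrix.mul_inv_of_invertible, Matrix.transpose_one]
  · intro j
    rw [Matrix.transpose_apply, hMentry, hB0]


lemma substAff_equiv {n : ℕ} (c : Fin n → ℝ) (P P' : Matrix (Fin n) (Fin n) ℝ)
    (h1 : P * P' = 1) (h2 : P' * P = 1) :
    ∃ Φ : MvPolynomial (Fin n) ℝ ≃ₐ[ℝ] MvPolynomial (Fin n) ℝ,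
      ∀ (p : MvPolynomial (Fin n) ℝ) (x : Fin n → ℝ),
        eval x (Φ p) = eval (fun j => c j + ∑ k, P k j * x k) p := by
  classical
  set f : Fin n → MvPolynomial (Fin n) ℝ :=
    fun j => C (c j) + ∑ k, C (P k j) * X k with hf
  set g : Fin n → MvPolynomial (Fin n) ℝ :=
    fun j => ∑ k, C (P' k j) * (X k - C (c k)) with hg
  have key1 : ∀ j, aeval f (g j) = X j := by
    intro j
    calc aeval f (g j)
        = ∑ k, C (P' k j) * ((C (c k) + ∑ l, C (P l k) * X l) - C (c k)) := by
          simp [hg, hf]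
      _ = ∑ k, ∑ l, C (P' k j) * (C (P l k) * X l) := by
          simp [add_sub_cancel_left, Finset.mul_sum]
      _ = ∑ l, ∑ k, C (P' k j) * (C (P l k) * X l) := Finset.sum_comm
      _ = ∑ l, C ((P * P') l j) * X l := by
          refine Finset.sum_congr rfl fun l _ => ?_
          rw [Matrix.mul_apply, map_sum, Finset.sum_mul]
          exact Finset.sum_congr rfl fun k _ => by rw [_root_.map_mul]; ring
      _ = X j := by
          rw [h1]
          rw [Finset.sum_eq_single j (fun l _ hl => by simp [Matrix.one_apply, hl])
            (by simp)]
          simp [Matrix.one_apply]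
  have key2 : ∀ j, aeval g (f j) = X j := by
    intro j
    calc aeval g (f j)
        = C (c j) + ∑ k, C (P k j) * ∑ l, C (P' l k) * (X l - C (c l)) := by
          simp [hf, hg]
      _ = C (c j) + ∑ k, ∑ l, C (P k j) * (C (P' l k) * (X l - C (c l))) := by
          simp [Finset.mul_sum]
      _ = C (c j) + ∑ l, ∑ k, C (P k j) * (C (P' l k) * (X l - C (c l))) := by
          rw [Finset.sum_comm]
      _ = C (c j) + ∑ l, C ((P' * P) l j) * (X l - C (c l)) := by
          congr 1
          refine Finset.sum_congr rfl fun l _ => ?_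
          rw [Matrix.mul_apply, map_sum, Finset.sum_mul]
          exact Finset.sum_congr rfl fun k _ => by rw [_root_.map_mul]; ring
      _ = X j := by
          rw [h2]
          rw [Finset.sum_eq_single j (fun l _ hl => by simp [Matrix.one_apply, hl])
            (by simp)]
          simp [Matrix.one_apply]
  refine ⟨AlgEquiv.ofAlgHom (aeval f) (aeval g) ?_ ?_, ?_⟩
  · apply MvPolynomial.algHom_ext
    intro j
    simp only [AlgHom.comp_apply, aeval_X, AlgHom.id_apply]
    exact key1 j
  · apply MvPolynomial.algHom_ext
    intro j
    simp only [AlgHom.comp_apply, aeval_X, AlgHom.id_apply]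
    exact key2 j
  · intro p x
    show eval x (aeval f p) = _
    have hcast : ∀ (y : Fin n → ℝ) (q : MvPolynomial (Fin n) ℝ), aeval y q = eval y q :=
      fun y q => rfl
    rw [← hcast x, comp_aeval_apply]
    rw [hcast]
    have harg : (fun i => aeval x (f i)) = fun j => c j + ∑ k, P k j * x k := by
      funext j
      simp [hf]
    rw [harg]

lemma key_dvd {e : ℕ} (s h : MvPolynomial (Fin (e+1)) ℝ) (hirr : Irreducible s)
    (a b : Fin (e+1) → ℝ) (ha : 0 < eval a s) (hb : eval b s < 0)
    (hvan : ∀ x, eval x s = 0 → eval x h = 0) : s ∣ h := by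
  classical
  by_contra hnd
  have hvne : (b - a) ≠ 0 := by
    intro hba
    have : b = a := by
      have := congrArg (fun w => w + a) hba
      simpa using this
    rw [this] at hb; linarith
  obtain ⟨P, P', h1, h2, hP0⟩ := exists_good_matrix (b - a) hvne
  obtain ⟨Φ, hΦ⟩ := substAff_equiv a P P' h1 h2
  set μ : (Fin (e+1) → ℝ) → (Fin (e+1) → ℝ) := fun x j => a j + ∑ k, P k j * x k with hμ
  have hΦ' : ∀ p x, eval x (Φ p) = eval (μ x) p := by
    intro p x; rw [hΦ]
  set S := Φ s with hS
  set H := Φ h with hH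
  have hSirr : Irreducible S := by
    have := (MulEquiv.irreducible_iff (Φ.toMulEquiv)).mpr hirr
    simpa using this
  have hSH : ∀ y, eval y S = 0 → eval y H = 0 := by
    intro y hy
    rw [hΦ'] at hy ⊢
    exact hvan _ hy
  have hSnd : ¬ S ∣ H := by
    intro hdvd
    exact hnd ((map_dvd_iff (Φ.toMulEquiv)).mp (by simpa using hdvd))
  -- evaluation of S at special points
  have hμ0 : μ (Fin.cons 0 (0 : Fin e → ℝ)) = a := by
    funext j
    simp [hμ, Fin.sum_univ_succ]
  have hμ1 : μ (Fin.cons 1 (0 : Fin e → ℝ)) = b := by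
    funext j
    simp only [hμ, Fin.sum_univ_succ, Fin.cons_zero, Fin.cons_succ, mul_one, mul_zero,
      Finset.sum_const_zero, add_zero, hP0, Pi.sub_apply, Pi.zero_apply]
    ring
  have hS0 : 0 < eval (Fin.cons 0 (0 : Fin e → ℝ)) S := by
    rw [hΦ', hμ0]; exact ha
  have hS1 : eval (Fin.cons 1 (0 : Fin e → ℝ)) S < 0 := by
    rw [hΦ', hμ1]; exact hb
  -- pass to univariate polynomials over D := MvPolynomial (Fin e) ℝ
  set Sh := finSuccEquiv ℝ e S with hSh
  set Hh := finSuccEquiv ℝ e H with hHh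
  have hShirr : Irreducible Sh := by
    have := (MulEquiv.irreducible_iff ((finSuccEquiv ℝ e).toMulEquiv)).mpr hSirr
    simpa using this
  have hShnd : ¬ Sh ∣ Hh := by
    intro hd
    exact hSnd ((map_dvd_iff ((finSuccEquiv ℝ e).toMulEquiv)).mp (by simpa using hd))
  have heval : ∀ (t : ℝ) (y' : Fin e → ℝ) (p : MvPolynomial (Fin (e+1)) ℝ),
      eval (Fin.cons t y') p = Polynomial.eval t ((finSuccEquiv ℝ e p).map (eval y')) :=
    fun t y' p => eval_eq_eval_mv_eval' y' t p
  have hdeg : Sh.natDegree ≠ 0 := by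
    intro h0
    obtain ⟨cc, hcc⟩ := Polynomial.natDegree_eq_zero.mp h0
    have e0 := heval 0 0 S
    have e1 := heval 1 0 S
    rw [← hSh, ← hcc] at e0 e1
    simp only [Polynomial.map_C, Polynomial.eval_C] at e0 e1
    rw [e0] at hS0
    rw [e1] at hS1
    linarith
  have hprim : Sh.IsPrimitive := by
    intro r hr
    obtain ⟨q, hq⟩ := hr
    rcases hShirr.isUnit_or_isUnit hq with hu | hu
    · exact Polynomial.isUnit_C.mp hu
    · exfalso
      obtain ⟨u, hu1, hu2⟩ := Polynomial.isUnit_iff.mp hu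
      apply hdeg
      rw [hq, ← hu2, ← Polynomial.C_mul]
      exact Polynomial.natDegree_C _
  letI : NormalizedGCDMonoid (MvPolynomial (Fin e) ℝ) := Classical.choice inferInstance
  set K := FractionRing (MvPolynomial (Fin e) ℝ) with hK
  set φK := algebraMap (MvPolynomial (Fin e) ℝ) K with hφK
  have hSmirr : Irreducible (Sh.map φK) :=
    (hprim.irreducible_iff_irreducible_map_fraction_map).mp hShirr
  have hSprime : Prime Sh := (UniqueFactorizationMonoid.irreducible_iff_prime).mp hShirr
  have hinj : Function.Injective (Polynomial.map φK) :=
    Polynomial.map_injective φK (IsFractionRing.injective _ _)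
  have hSmnd : ¬ Sh.map φK ∣ Hh.map φK := by
    rintro ⟨Q, hQ⟩
    obtain ⟨dd, hdd⟩ := IsLocalization.integerNormalization_map_to_map
      (nonZeroDivisors (MvPolynomial (Fin e) ℝ)) Q
    have hmapeq : (Polynomial.C (dd : MvPolynomial (Fin e) ℝ) * Hh).map φK
        = (Sh * IsLocalization.integerNormalization (nonZeroDivisors _) Q).map φK := by
      rw [Polynomial.map_mul, Polynomial.map_mul, hdd, Polynomial.map_C]
      rw [← algebraMap_smul K (dd : MvPolynomial (Fin e) ℝ) Q, Polynomial.smul_eq_C_mul]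
      rw [hQ]
      ring
    have heqD : Polynomial.C (dd : MvPolynomial (Fin e) ℝ) * Hh
        = Sh * IsLocalization.integerNormalization (nonZeroDivisors _) Q := hinj hmapeq
    have hdvdC : Sh ∣ Polynomial.C (dd : MvPolynomial (Fin e) ℝ) * Hh := ⟨_, heqD⟩
    rcases hSprime.2.2 _ _ hdvdC with hA | hB
    · have hCne : (Polynomial.C (dd : MvPolynomial (Fin e) ℝ)) ≠ 0 := by
        rw [Ne, Polynomial.C_eq_zero]
        exact nonZeroDivisors.coe_ne_zero dd
      have := Polynomial.natDegree_le_of_dvd hA hCne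
      rw [Polynomial.natDegree_C] at this
      exact hdeg (Nat.le_zero.mp this)
    · exact hShnd hB
  have hcop : IsCoprime (Sh.map φK) (Hh.map φK) :=
    (hSmirr.coprime_iff_not_dvd).mpr hSmnd
  obtain ⟨A', B', hAB⟩ := hcop
  obtain ⟨da, hda⟩ := IsLocalization.integerNormalization_map_to_map
    (nonZeroDivisors (MvPolynomial (Fin e) ℝ)) A'
  obtain ⟨db, hdb⟩ := IsLocalization.integerNormalization_map_to_map
    (nonZeroDivisors (MvPolynomial (Fin e) ℝ)) B'
  set A := IsLocalization.integerNormalization (nonZeroDivisors (MvPolynomial (Fin e) ℝ)) A' with hA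
  set B := IsLocalization.integerNormalization (nonZeroDivisors (MvPolynomial (Fin e) ℝ)) B' with hB
  set r := (db : MvPolynomial (Fin e) ℝ) * (da : MvPolynomial (Fin e) ℝ) with hr
  have hr0 : r ≠ 0 := mul_ne_zero (nonZeroDivisors.coe_ne_zero db) (nonZeroDivisors.coe_ne_zero da)
  have hid : Polynomial.C r
      = Polynomial.C (db : MvPolynomial (Fin e) ℝ) * A * Sh
        + Polynomial.C (da : MvPolynomial (Fin e) ℝ) * B * Hh := by
    apply hinj
    rw [Polynomial.map_add, Polynomial.map_mul, Polynomial.map_mul, Polynomial.map_mul,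
      Polynomial.map_mul, Polynomial.map_C, Polynomial.map_C, Polynomial.map_C, hda, hdb]
    rw [← algebraMap_smul K (da : MvPolynomial (Fin e) ℝ) A', Polynomial.smul_eq_C_mul,
      ← algebraMap_smul K (db : MvPolynomial (Fin e) ℝ) B', Polynomial.smul_eq_C_mul]
    have : A' * Sh.map φK + B' * Hh.map φK = 1 := hAB
    calc Polynomial.C (φK r) = Polynomial.C (φK (db : MvPolynomial (Fin e) ℝ))
          * Polynomial.C (φK (da : MvPolynomial (Fin e) ℝ))
          * (A' * Sh.map φK + B' * Hh.map φK) := by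
            rw [this, mul_one, ← Polynomial.C_mul, ← _root_.map_mul, hr]
      _ = _ := by ring
  -- analytic part
  have hcont : ∀ t : ℝ, Continuous fun y' : Fin e → ℝ => eval (Fin.cons t y') S := by
    intro t
    apply (MvPolynomial.continuous_eval S).comp
    refine continuous_pi fun i => ?_
    refine Fin.cases ?_ ?_ i
    · simpa using continuous_const
    · intro j; simpa using continuous_apply j
  have hopen : IsOpen {y' : Fin e → ℝ |
      0 < eval (Fin.cons 0 y') S ∧ eval (Fin.cons 1 y') S < 0} :=
    (isOpen_lt continuous_const (hcont 0)).inter (isOpen_lt (hcont 1) continuous_const)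
  have hmem0 : (0 : Fin e → ℝ) ∈ {y' : Fin e → ℝ |
      0 < eval (Fin.cons 0 y') S ∧ eval (Fin.cons 1 y') S < 0} := ⟨hS0, hS1⟩
  obtain ⟨ε, hε, hballsub⟩ := Metric.isOpen_iff.mp hopen 0 hmem0
  have hrz : r = 0 := by
    apply zero_of_ball r 0 ε hε
    intro y' hy'
    have hy'mem : y' ∈ {y' : Fin e → ℝ |
        0 < eval (Fin.cons 0 y') S ∧ eval (Fin.cons 1 y') S < 0} := by
      apply hballsub
      rw [Metric.mem_ball, dist_pi_lt_iff hε]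
      intro i
      rw [Real.dist_eq]
      simpa using hy' i
    have hcontt : Continuous fun t : ℝ => eval (Fin.cons t y') S := by
      apply (MvPolynomial.continuous_eval S).comp
      refine continuous_pi fun i => ?_
      refine Fin.cases ?_ ?_ i
      · simpa using continuous_id'
      · intro j; simpa using continuous_const
    obtain ⟨t, ht01, htz⟩ : ∃ t ∈ Set.Icc (0:ℝ) 1, eval (Fin.cons t y') S = 0 := by
      have hiv := intermediate_value_Icc' (by norm_num : (0:ℝ) ≤ 1) hcontt.continuousOn
      have h0mem : (0:ℝ) ∈ Set.Icc (eval (Fin.cons 1 y') S) (eval (Fin.cons 0 y') S) :=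
        ⟨le_of_lt hy'mem.2, le_of_lt hy'mem.1⟩
      obtain ⟨t, ht, htv⟩ := hiv h0mem
      exact ⟨t, ht, htv⟩
    have hHz : eval (Fin.cons t y') H = 0 := hSH _ htz
    have hev := congrArg (fun q => Polynomial.eval t (q.map (eval y'))) hid
    simp only [Polynomial.map_add, Polynomial.map_mul, Polynomial.map_C, Polynomial.eval_add,
      Polynomial.eval_mul, Polynomial.eval_C] at hev
    rw [← heval t y' S, ← heval t y' H, htz, hHz, mul_zero, mul_zero, add_zero] at hev
    exact hev
  exact hr0 hrz

/-- if `F` is PSD but not a sum of squares and `s` is irreducible and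
indefinite, then `s²F` is PSD and not a sum of squares. -/
theorem psd_not_sos_times_indefinite_square (d : ℕ)
    (F s : MvPolynomial (Fin d) ℝ)
    (hPSD : ∀ x : Fin d → ℝ, 0 ≤ eval x F)
    (hnotSOS : ¬ IsSOSReal F)
    (hirr : Irreducible s)
    (hindef : (∃ a : Fin d → ℝ, 0 < eval a s) ∧ (∃ b : Fin d → ℝ, eval b s < 0)) :
    (∀ x : Fin d → ℝ, 0 ≤ eval x (s ^ 2 * F)) ∧ ¬ IsSOSReal (s ^ 2 * F) := by
  obtain ⟨⟨a, ha⟩, ⟨b, hb⟩⟩ := hindef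
  constructor
  · intro x
    rw [_root_.map_mul, map_pow]
    exact mul_nonneg (sq_nonneg _) (hPSD x)
  · rintro ⟨k, g, heq⟩
    cases d with
    | zero =>
        have hab : a = b := Subsingleton.elim a b
        rw [hab] at ha; linarith
    | succ e =>
        have hvan : ∀ i : Fin k, ∀ x, eval x s = 0 → eval x (g i) = 0 := by
          intro i x hx
          have hz : ∑ j, (eval x (g j))^2 = 0 := by
            have hev := congrArg (eval x) heq
            simp only [_root_.map_mul, map_pow, map_sum] at hev
            rw [hx] at hev
            simpa using hev.symm
          have hterm := (Finset.sum_eq_zero_iff_of_nonneg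
            (fun j _ => sq_nonneg (eval x (g j)))).mp hz i (Finset.mem_univ i)
          exact sq_eq_zero_iff.mp hterm
        have hdvd : ∀ i, s ∣ g i := fun i => key_dvd s (g i) hirr a b ha hb (hvan i)
        choose q hq using hdvd
        have heq2 : s^2 * F = s^2 * ∑ i, q i ^ 2 := by
          rw [heq, Finset.mul_sum]
          exact Finset.sum_congr rfl fun i _ => by rw [hq i]; ring
        have hF : F = ∑ i, q i ^ 2 :=
          mul_left_cancel₀ (pow_ne_zero 2 hirr.ne_zero) heq2
        exact hnotSOS ⟨k, q, hF⟩
end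
end
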